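/- arXiv:1806.01215 — 7 statements merged into one kernel-verified Lean document; each statement's English description precedes it below -/
import Mathlib

section
/- For any u ∈ L¹(X, ν), the coarea formula holds: TV_m(u) = ∫_{−∞}^{+∞} P_m(E_t(u)) dt, where E_t(u) = {x ∈ X : u(x) > t}. -/
open MeasureTheory ProbabilityTheory
open scoped ENNReal

/-- The joint measure `dm_x(y) dν(x)` on `X × X`. -/
noncomputable def jointMeasure {X : Type*} [MeasurableSpace X] (ν : Measure X)
    (m : X → Measure X) : Measure (X × X) :=
  ν.bind (fun x => (m x).map (fun y => (x, y)))

/-- Reversibility of `ν` for the random walk `m`. -/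
def Reversible {X : Type*} [MeasurableSpace X] (ν : Measure X) (m : X → Measure X) : Prop :=
  (jointMeasure ν m).map Prod.swap = jointMeasure ν m

section Aux

variable {X : Type*} [MeasurableSpace X] {ν : Measure X} {m : X → Measure X}

/-- ite indicator of an `Ico` integrates to `ofReal (b - a)`. -/
lemma aux_ico (a b : ℝ) :
    ∫⁻ t : ℝ, (if t < b ∧ a ≤ t then (1 : ℝ≥0∞) else 0) = ENNReal.ofReal (b - a) := by
  have h : ∀ t : ℝ, (if t < b ∧ a ≤ t then (1 : ℝ≥0∞) else 0)
      = (Set.Ico a b).indicator (1 : ℝ → ℝ≥0∞) t := by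
    intro t
    simp [Set.indicator_apply, Set.mem_Ico, and_comm]
  simp_rw [h]
  rw [lintegral_indicator_one measurableSet_Ico, Real.volume_Ico]

lemma aux_kernel_meas (hm : Measurable m) (hprob : ∀ x, IsProbabilityMeasure (m x)) :
    Measurable (fun x => (m x).map (fun y => (x, y))) := by
  apply Measure.measurable_of_measurable_coe
  intro s hs
  have h : ∀ x, (m x).map (fun y => (x, y)) s = m x (Prod.mk x ⁻¹' s) := by
    intro x
    rw [Measure.map_apply measurable_prodMk_left hs]
  simp_rw [h]
  haveI : IsMarkovKernel (⟨m, hm⟩ : Kernel X X) := ⟨hprob⟩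
  exact Kernel.measurable_kernel_prodMk_left (κ := ⟨m, hm⟩) hs

/-- Integrate against the joint measure by iterated integration. -/
lemma aux_joint_lintegral (hm : Measurable m) (hprob : ∀ x, IsProbabilityMeasure (m x))
    {f : X × X → ℝ≥0∞} (hf : Measurable f) :
    ∫⁻ p, f p ∂(jointMeasure ν m) = ∫⁻ x, ∫⁻ y, f (x, y) ∂(m x) ∂ν := by
  rw [jointMeasure, Measure.lintegral_bind (aux_kernel_meas hm hprob).aemeasurable hf.aemeasurable]
  refine lintegral_congr fun x => ?_
  rw [lintegral_map hf measurable_prodMk_left]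

end Aux

/-- Coarea formula: for `u ∈ L¹(X,ν)`,
`TV_m(u) = ∫_ℝ P_m({u > t}) dt`, where
`TV_m(u) = (1/2)∫∫ |u(y)-u(x)| dm_x(y)dν(x)` and
`P_m(E) = ∫_E m_x(X∖E) dν(x)`. -/
theorem coarea_formula {X : Type*} [MeasurableSpace X]
    (ν : Measure X) (m : X → Measure X)
    (hm : Measurable m) (hprob : ∀ x, IsProbabilityMeasure (m x))
    (hinv : ν.bind m = ν) (hrev : Reversible ν m)
    (u : X → ℝ) (hu : Measurable u) (hu1 : Integrable u ν) :
    (1/2) * ∫ x, (∫ y, |u y - u x| ∂(m x)) ∂ν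
      = ∫ t : ℝ, (∫ x in {x | t < u x}, (m x ({y | t < u y}ᶜ)).toReal ∂ν) := by
  classical
  set π : Measure (X × X) := jointMeasure ν m with hπdef
  have hrev' : π.map Prod.swap = π := hrev
  -- reversibility as a lintegral statement
  have hswap : ∀ f : X × X → ℝ≥0∞, Measurable f →
      ∫⁻ p, f (p.2, p.1) ∂π = ∫⁻ p, f p ∂π := by
    intro f hf
    conv_rhs => rw [← hrev']
    rw [lintegral_map hf measurable_swap]
    rfl
  have hjl : ∀ {f : X × X → ℝ≥0∞}, Measurable f →
      ∫⁻ p, f p ∂π = ∫⁻ x, ∫⁻ y, f (x, y) ∂(m x) ∂ν := fun hf =>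
    aux_joint_lintegral hm hprob hf
  -- basic measurability
  have hu2 : Measurable fun p : X × X => u p.2 := hu.comp measurable_snd
  have hu1' : Measurable fun p : X × X => u p.1 := hu.comp measurable_fst
  have habs : Measurable fun p : X × X => ENNReal.ofReal |u p.2 - u p.1| :=
    ((hu2.sub hu1').abs).ennreal_ofReal
  have hsub : Measurable fun p : X × X => ENNReal.ofReal (u p.2 - u p.1) :=
    (hu2.sub hu1').ennreal_ofReal
  -- the main quantities
  set L : ℝ≥0∞ := ∫⁻ p, ENNReal.ofReal |u p.2 - u p.1| ∂π with hLdef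
  set D : ℝ≥0∞ := ∫⁻ p, ENNReal.ofReal (u p.2 - u p.1) ∂π with hDdef
  -- finiteness of L
  have hInorm : ∫⁻ x, ENNReal.ofReal |u x| ∂ν < ⊤ := by
    have h := hu1.hasFiniteIntegral
    rw [HasFiniteIntegral] at h
    refine lt_of_eq_of_lt ?_ h
    refine lintegral_congr fun x => ?_
    rw [← Real.enorm_eq_ofReal_abs]
  have hfst : ∫⁻ p, ENNReal.ofReal |u p.1| ∂π = ∫⁻ x, ENNReal.ofReal |u x| ∂ν := by
    rw [hjl (hu1'.abs.ennreal_ofReal)]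
    refine lintegral_congr fun x => ?_
    haveI := hprob x
    simp
  have hsnd : ∫⁻ p, ENNReal.ofReal |u p.2| ∂π = ∫⁻ x, ENNReal.ofReal |u x| ∂ν := by
    rw [hjl (hu2.abs.ennreal_ofReal)]
    rw [← Measure.lintegral_bind hm.aemeasurable (hu.abs.ennreal_ofReal).aemeasurable, hinv]
  have hL_top : L < ⊤ := by
    have hle : L ≤ ∫⁻ p, (ENNReal.ofReal |u p.1| + ENNReal.ofReal |u p.2|) ∂π := by
      refine lintegral_mono fun p => ?_
      rw [← ENNReal.ofReal_add (abs_nonneg _) (abs_nonneg _)]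
      refine ENNReal.ofReal_le_ofReal ?_
      calc |u p.2 - u p.1| ≤ |u p.2| + |u p.1| := abs_sub _ _
      _ = |u p.1| + |u p.2| := add_comm _ _
    refine lt_of_le_of_lt hle ?_
    rw [lintegral_add_left (hu1'.abs.ennreal_ofReal), hfst, hsnd]
    exact ENNReal.add_lt_top.mpr ⟨hInorm, hInorm⟩
  have hD_le : D ≤ L := lintegral_mono fun p => ENNReal.ofReal_le_ofReal (le_abs_self _)
  have hD_top : D < ⊤ := lt_of_le_of_lt hD_le hL_top
  -- symmetrization : L = 2 * D
  have hL2D : L = 2 * D := by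
    have h1 : ∀ p : X × X, ENNReal.ofReal |u p.2 - u p.1|
        = ENNReal.ofReal (u p.2 - u p.1) + ENNReal.ofReal (u p.1 - u p.2) := by
      intro p
      rcases le_total (u p.1) (u p.2) with h | h
      · rw [abs_of_nonneg (by linarith : (0:ℝ) ≤ u p.2 - u p.1),
          ENNReal.ofReal_of_nonpos (show u p.1 - u p.2 ≤ 0 by linarith), add_zero]
      · rw [abs_of_nonpos (by linarith : u p.2 - u p.1 ≤ 0), neg_sub,
          ENNReal.ofReal_of_nonpos (show u p.2 - u p.1 ≤ 0 by linarith), zero_add]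
    have h2 : ∫⁻ p, ENNReal.ofReal (u p.1 - u p.2) ∂π = D := by
      have := hswap (fun p => ENNReal.ofReal (u p.2 - u p.1)) hsub
      exact this
    calc L = ∫⁻ p, (ENNReal.ofReal (u p.2 - u p.1) + ENNReal.ofReal (u p.1 - u p.2)) ∂π :=
          lintegral_congr h1
      _ = D + ∫⁻ p, ENNReal.ofReal (u p.1 - u p.2) ∂π := lintegral_add_left hsub _
      _ = D + D := by rw [h2]
      _ = 2 * D := (two_mul D).symm
  -- the double-indicator function
  set F : ℝ → X × X → ℝ≥0∞ := fun t p => if t < u p.2 ∧ u p.1 ≤ t then 1 else 0 with hFdef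
  have hF_meas : ∀ t, Measurable (F t) := by
    intro t
    exact Measurable.ite
      ((measurableSet_lt measurable_const hu2).inter (measurableSet_le hu1' measurable_const))
      measurable_const measurable_const
  have hFu : Measurable (fun q : (X × X) × ℝ => F q.2 q.1) := by
    have ha : Measurable fun q : (X × X) × ℝ => u q.1.2 := hu.comp measurable_fst.snd
    have hb : Measurable fun q : (X × X) × ℝ => u q.1.1 := hu.comp measurable_fst.fst
    exact Measurable.ite
      ((measurableSet_lt measurable_snd ha).inter (measurableSet_le hb measurable_snd))
      measurable_const measurable_const
  have hFu' : Measurable (fun q : ℝ × (X × X) => F q.1 q.2) := by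
    have ha : Measurable fun q : ℝ × (X × X) => u q.2.2 := hu.comp measurable_snd.snd
    have hb : Measurable fun q : ℝ × (X × X) => u q.2.1 := hu.comp measurable_snd.fst
    exact Measurable.ite
      ((measurableSet_lt measurable_fst ha).inter (measurableSet_le hb measurable_fst))
      measurable_const measurable_const
  -- the sigma-finite carrier
  set G : Set (X × X) := {p | 0 < u p.2 ∨ u p.1 < 0} with hGdef
  have hG : MeasurableSet G :=
    (measurableSet_lt measurable_const hu2).union (measurableSet_lt hu1' measurable_const)
  -- marginals of π on half-spaces
  have hmargsnd : ∀ c : ℝ, π {p : X × X | c < u p.2} = ν {x | c < u x} := by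
    intro c
    have hset : MeasurableSet {p : X × X | c < u p.2} := measurableSet_lt measurable_const hu2
    have hset' : MeasurableSet {y | c < u y} := measurableSet_lt measurable_const hu
    have h1 := hjl (f := Set.indicator {p : X × X | c < u p.2} (1 : X × X → ℝ≥0∞))
      (measurable_one.indicator hset)
    rw [lintegral_indicator_one hset] at h1
    rw [h1]
    have h2 : ∀ x, ∫⁻ y, Set.indicator {p : X × X | c < u p.2} (1 : X × X → ℝ≥0∞) (x, y)
        ∂(m x) = m x {y | c < u y} := by
      intro x
      have h3 : ∀ y, Set.indicator {p : X × X | c < u p.2} (1 : X × X → ℝ≥0∞) (x, y)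
          = Set.indicator {y | c < u y} (1 : X → ℝ≥0∞) y := by
        intro y; simp [Set.indicator_apply]
      simp_rw [h3]
      rw [lintegral_indicator_one hset']
    rw [lintegral_congr h2, ← Measure.bind_apply hset' hm.aemeasurable, hinv]
  have hmargfst : ∀ c : ℝ, π {p : X × X | u p.1 < c} = ν {x | u x < c} := by
    intro c
    have hset : MeasurableSet {p : X × X | u p.1 < c} := measurableSet_lt hu1' measurable_const
    have hset' : MeasurableSet {x | u x < c} := measurableSet_lt hu measurable_const
    have h1 := hjl (f := Set.indicator {p : X × X | u p.1 < c} (1 : X × X → ℝ≥0∞))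
      (measurable_one.indicator hset)
    rw [lintegral_indicator_one hset] at h1
    rw [h1]
    have h2 : ∀ x, ∫⁻ y, Set.indicator {p : X × X | u p.1 < c} (1 : X × X → ℝ≥0∞) (x, y)
        ∂(m x) = Set.indicator {x | u x < c} (1 : X → ℝ≥0∞) x := by
      intro x
      have h3 : ∀ y, Set.indicator {p : X × X | u p.1 < c} (1 : X × X → ℝ≥0∞) (x, y)
          = Set.indicator {x | u x < c} (1 : X → ℝ≥0∞) x := by
        intro y; simp [Set.indicator_apply]
      simp_rw [h3]
      haveI := hprob x
      simp
    rw [lintegral_congr h2, lintegral_indicator_one hset']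
  -- finite pieces
  have hfin_pos : ∀ n : ℕ, ν {x | 1 / (n + 1 : ℝ) < u x} < ⊤ := by
    intro n
    have hε : (0 : ℝ) < 1 / (n + 1 : ℝ) := by positivity
    refine lt_of_le_of_lt (measure_mono ?_) (hu1.measure_ge_lt_top hε)
    intro x hx
    simp only [Set.mem_setOf_eq] at hx ⊢
    exact hx.le
  have hfin_neg : ∀ n : ℕ, ν {x | u x < -(1 / (n + 1 : ℝ))} < ⊤ := by
    intro n
    have hε : (0 : ℝ) < 1 / (n + 1 : ℝ) := by positivity
    refine lt_of_le_of_lt (measure_mono ?_) (hu1.neg.measure_ge_lt_top hε)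
    intro x hx
    simp only [Set.mem_setOf_eq, Pi.neg_apply] at hx ⊢
    linarith
  -- σ-finiteness of the restricted joint measure
  haveI hsf : SigmaFinite (π.restrict G) := by
    constructor
    refine ⟨⟨fun n => ({p : X × X | 1 / (n + 1 : ℝ) < u p.2}
        ∪ {p : X × X | u p.1 < -(1 / (n + 1 : ℝ))}) ∪ Gᶜ, fun n => trivial, ?_, ?_⟩⟩
    · intro n
      rw [Measure.restrict_apply' hG]
      have hss : (({p : X × X | 1 / (n + 1 : ℝ) < u p.2}
          ∪ {p : X × X | u p.1 < -(1 / (n + 1 : ℝ))}) ∪ Gᶜ) ∩ G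
          ⊆ {p : X × X | 1 / (n + 1 : ℝ) < u p.2}
          ∪ {p : X × X | u p.1 < -(1 / (n + 1 : ℝ))} := by
        rintro p ⟨hp1 | hp2, hpG⟩
        · exact hp1
        · exact absurd hpG hp2
      refine lt_of_le_of_lt (measure_mono hss) ?_
      refine lt_of_le_of_lt (measure_union_le _ _) ?_
      rw [hmargsnd, hmargfst]
      exact ENNReal.add_lt_top.mpr ⟨hfin_pos n, hfin_neg n⟩
    · ext p
      simp only [Set.mem_iUnion, Set.mem_union, Set.mem_setOf_eq, Set.mem_compl_iff,
        Set.mem_univ, iff_true]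
      by_cases hp : p ∈ G
      · rcases hp with hpos | hneg
        · obtain ⟨n, hn⟩ := exists_nat_one_div_lt hpos
          exact ⟨n, Or.inl (Or.inl hn)⟩
        · obtain ⟨n, hn⟩ := exists_nat_one_div_lt (neg_pos.mpr hneg)
          exact ⟨n, Or.inl (Or.inr (by linarith))⟩
      · exact ⟨0, Or.inr hp⟩
  -- vanishing off G
  have hvanish1 : ∀ p ∉ G, ENNReal.ofReal (u p.2 - u p.1) = 0 := by
    intro p hp
    rw [hGdef, Set.mem_setOf_eq, not_or, not_lt, not_lt] at hp
    exact ENNReal.ofReal_of_nonpos (by linarith [hp.1, hp.2])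
  have hvanish2 : ∀ t : ℝ, ∀ p ∉ G, F t p = 0 := by
    intro t p hp
    rw [hGdef, Set.mem_setOf_eq, not_or, not_lt, not_lt] at hp
    rw [hFdef]
    simp only [ite_eq_right_iff, and_imp]
    intro h1 h2
    exfalso
    linarith [hp.1, hp.2]
  have hrestr : ∀ {f : X × X → ℝ≥0∞}, (∀ p ∉ G, f p = 0) →
      ∫⁻ p in G, f p ∂π = ∫⁻ p, f p ∂π := by
    intro f h0
    rw [← lintegral_indicator hG]
    refine lintegral_congr fun p => ?_
    by_cases hp : p ∈ G
    · simp [Set.indicator_apply, hp]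
    · simp [Set.indicator_apply, hp, h0 p hp]
  -- key per-t identity
  have hcompl : ∀ t : ℝ, {y | t < u y}ᶜ = {y | u y ≤ t} := by
    intro t; ext y; simp [not_lt]
  have hkey : ∀ t : ℝ, ∫⁻ p, F t p ∂π = ∫⁻ x in {x | t < u x}, m x ({y | t < u y}ᶜ) ∂ν := by
    intro t
    have hEt : MeasurableSet {x | t < u x} := measurableSet_lt measurable_const hu
    have hmeas2 : Measurable fun p : X × X => (if t < u p.1 ∧ u p.2 ≤ t then (1 : ℝ≥0∞) else 0) :=
      Measurable.ite
        ((measurableSet_lt measurable_const hu1').inter (measurableSet_le hu2 measurable_const))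
        measurable_const measurable_const
    have h1 : ∫⁻ p, F t p ∂π
        = ∫⁻ p : X × X, (if t < u p.1 ∧ u p.2 ≤ t then (1 : ℝ≥0∞) else 0) ∂π := by
      have := hswap (fun p => if t < u p.1 ∧ u p.2 ≤ t then (1 : ℝ≥0∞) else 0) hmeas2
      exact this
    rw [h1, hjl hmeas2]
    have h2 : ∀ x, ∫⁻ y, (if t < u x ∧ u y ≤ t then (1 : ℝ≥0∞) else 0) ∂(m x)
        = Set.indicator {x | t < u x} (fun x => m x {y | u y ≤ t}) x := by
      intro x
      by_cases hx : t < u x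
      · rw [Set.indicator_of_mem (show x ∈ {x | t < u x} from hx)]
        simp only [hx, true_and]
        have h3 : ∀ y, (if u y ≤ t then (1 : ℝ≥0∞) else 0)
            = Set.indicator {y | u y ≤ t} (1 : X → ℝ≥0∞) y := by
          intro y; simp [Set.indicator_apply]
        simp_rw [h3]
        exact lintegral_indicator_one (measurableSet_le hu measurable_const)
      · rw [Set.indicator_of_notMem (show x ∉ {x | t < u x} from hx)]
        simp [hx]
    rw [lintegral_congr h2, lintegral_indicator hEt, hcompl t]
  -- per-p t-integral
  have hico : ∀ p : X × X, ∫⁻ t : ℝ, F t p = ENNReal.ofReal (u p.2 - u p.1) := fun p =>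
    aux_ico (u p.1) (u p.2)
  -- restriction identities
  have hQrestr : ∀ t : ℝ, ∫⁻ p, F t p ∂π = ∫⁻ p in G, F t p ∂π := fun t =>
    (hrestr (hvanish2 t)).symm
  -- the swap
  have hswapG : ∫⁻ p in G, (∫⁻ t : ℝ, F t p) ∂π = ∫⁻ t : ℝ, ∫⁻ p in G, F t p ∂π := by
    exact lintegral_lintegral_swap (μ := π.restrict G) (ν := (volume : Measure ℝ))
      (f := fun p t => F t p) hFu.aemeasurable
  -- putting together the t-side
  have hDQ : ∫⁻ t : ℝ, (∫⁻ x in {x | t < u x}, m x ({y | t < u y}ᶜ) ∂ν) = D := by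
    calc ∫⁻ t : ℝ, (∫⁻ x in {x | t < u x}, m x ({y | t < u y}ᶜ) ∂ν)
        = ∫⁻ t : ℝ, ∫⁻ p in G, F t p ∂π := by
          refine lintegral_congr fun t => ?_
          rw [← hkey t, hQrestr t]
      _ = ∫⁻ p in G, (∫⁻ t : ℝ, F t p) ∂π := hswapG.symm
      _ = ∫⁻ p in G, ENNReal.ofReal (u p.2 - u p.1) ∂π := lintegral_congr fun p => hico p
      _ = D := hrestr hvanish1
  -- measurability of the t-integrand
  have hQmeas : Measurable fun t : ℝ => ∫⁻ x in {x | t < u x}, m x ({y | t < u y}ᶜ) ∂ν := by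
    have h : (fun t : ℝ => ∫⁻ x in {x | t < u x}, m x ({y | t < u y}ᶜ) ∂ν)
        = fun t => ∫⁻ p in G, F t p ∂π := by
      funext t; rw [← hkey t, hQrestr t]
    rw [h]
    exact Measurable.lintegral_prod_right (f := F) (ν := π.restrict G) hFu'
  have hQfin : ∀ᵐ t : ℝ, (∫⁻ x in {x | t < u x}, m x ({y | t < u y}ᶜ) ∂ν) < ⊤ :=
    ae_lt_top hQmeas (by rw [hDQ]; exact hD_top.ne)
  -- LHS conversion
  have hφmeas : Measurable fun x => ∫⁻ y, ENNReal.ofReal |u y - u x| ∂(m x) := by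
    haveI : IsMarkovKernel (⟨m, hm⟩ : Kernel X X) := ⟨hprob⟩
    exact Measurable.lintegral_kernel_prod_right' (κ := ⟨m, hm⟩)
      (f := fun q : X × X => ENNReal.ofReal |u q.2 - u q.1|) habs
  have hφL : ∫⁻ x, (∫⁻ y, ENNReal.ofReal |u y - u x| ∂(m x)) ∂ν = L := (hjl habs).symm
  have hφfin : ∀ᵐ x ∂ν, (∫⁻ y, ENNReal.ofReal |u y - u x| ∂(m x)) < ⊤ :=
    ae_lt_top hφmeas (by rw [hφL]; exact hL_top.ne)
  have hLHS : ∫ x, (∫ y, |u y - u x| ∂(m x)) ∂ν = L.toReal := by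
    have hinner : ∀ x, ∫ y, |u y - u x| ∂(m x)
        = (∫⁻ y, ENNReal.ofReal |u y - u x| ∂(m x)).toReal := by
      intro x
      rw [integral_eq_lintegral_of_nonneg_ae (f := fun y => |u y - u x|)
        (ae_of_all _ fun y => abs_nonneg _)
        (((hu.sub measurable_const).abs.aestronglyMeasurable :
          AEStronglyMeasurable (fun y => |u y - u x|) (m x)))]
    simp_rw [hinner]
    rw [integral_eq_lintegral_of_nonneg_ae (ae_of_all _ fun x => ENNReal.toReal_nonneg)
      hφmeas.ennreal_toReal.aestronglyMeasurable]
    congr 1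
    rw [← hφL]
    refine lintegral_congr_ae ?_
    filter_upwards [hφfin] with x hx
    rw [ENNReal.ofReal_toReal hx.ne]
  -- RHS conversion
  have hwmeas : ∀ t : ℝ, Measurable fun x => m x ({y | t < u y}ᶜ) := fun t =>
    (Measure.measurable_coe ((measurableSet_lt measurable_const hu).compl)).comp hm
  have hRinner : ∀ t : ℝ, ∫ x in {x | t < u x}, (m x ({y | t < u y}ᶜ)).toReal ∂ν
      = (∫⁻ x in {x | t < u x}, m x ({y | t < u y}ᶜ) ∂ν).toReal := by
    intro t
    rw [integral_eq_lintegral_of_nonneg_ae (ae_of_all _ fun x => ENNReal.toReal_nonneg)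
      ((hwmeas t).ennreal_toReal.aestronglyMeasurable)]
    congr 1
    refine lintegral_congr fun x => ?_
    haveI := hprob x
    rw [ENNReal.ofReal_toReal (measure_ne_top (m x) _)]
  have hRHS : ∫ t : ℝ, (∫ x in {x | t < u x}, (m x ({y | t < u y}ᶜ)).toReal ∂ν)
      = D.toReal := by
    simp_rw [hRinner]
    rw [integral_eq_lintegral_of_nonneg_ae (ae_of_all _ fun t => ENNReal.toReal_nonneg)
      hQmeas.ennreal_toReal.aestronglyMeasurable]
    rw [← hDQ]
    congr 1
    refine lintegral_congr_ae ?_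
    filter_upwards [hQfin] with t ht
    rw [ENNReal.ofReal_toReal ht.ne]
  rw [hLHS, hRHS, hL2D, ENNReal.toReal_mul]
  norm_num
  ring
end

section
/- A metric random walk space [X,d,m] with reversible measure ν is m-connected if and only if for every pair of ν-measurable sets A, B of positive ν-measure with A ∪ B = X, the interaction L_m(A,B) = ∫_A m_x(B) dν(x) is strictly positive. -/
open MeasureTheory

/-- The `n`-step convolution of a random walk. -/
noncomputable def iterRW {X : Type*} [MeasurableSpace X] (m : X → Measure X) :
    ℕ → X → Measure X
  | 0 => fun x => Measure.dirac x
  | n + 1 => fun x => (iterRW m n x).bind m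

/-- The set `N^m_D = {x : m_x^{*n}(D) = 0 for all n ≥ 1}`. -/
def NSet {X : Type*} [MeasurableSpace X] (m : X → Measure X) (D : Set X) : Set X :=
  {x : X | ∀ n : ℕ, 1 ≤ n → iterRW m n x D = 0}

/-- `m`-connectedness: `ν(N^m_D) = 0` for every `D` with `0 < ν(D) < ∞`. -/
def MConnected {X : Type*} [MeasurableSpace X] (ν : Measure X) (m : X → Measure X) : Prop :=
  ∀ D : Set X, MeasurableSet D → 0 < ν D → ν D < ⊤ → ν (NSet m D) = 0

section Aux

variable {X : Type*} [MeasurableSpace X] {m : X → Measure X}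

lemma measurable_iterRW (hm : Measurable m) : ∀ n, Measurable (iterRW m n)
  | 0 => Measure.measurable_dirac
  | (n + 1) => (Measure.measurable_bind' hm).comp (measurable_iterRW hm n)

lemma iterRW_one (hm : Measurable m) (x : X) : iterRW m 1 x = m x := by
  show (Measure.dirac x).bind m = m x
  exact Measure.dirac_bind hm x

lemma iterRW_succ_eq (hm : Measurable m) : ∀ n (x : X),
    iterRW m (n + 1) x = (m x).bind (iterRW m n)
  | 0, x => by
    rw [iterRW_one hm]
    show m x = (m x).bind (fun y => Measure.dirac y)
    exact (Measure.bind_dirac).symm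
  | (n + 1), x => by
    show (iterRW m (n + 1) x).bind m = _
    rw [iterRW_succ_eq hm n x, Measure.bind_bind (measurable_iterRW hm n).aemeasurable hm.aemeasurable]
    rfl

lemma iterRW_succ_apply' (hm : Measurable m) {s : Set X} (hs : MeasurableSet s) (n : ℕ) (x : X) :
    iterRW m (n + 1) x s = ∫⁻ y, iterRW m n y s ∂(m x) := by
  rw [iterRW_succ_eq hm, Measure.bind_apply hs (measurable_iterRW hm n).aemeasurable]

/-- Reversibility implies invariance of `ν`. -/
lemma bind_eq_self {ν : Measure X} (hm : Measurable m)
    (hprob : ∀ x, IsProbabilityMeasure (m x)) (hrev : Reversible ν m) :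
    ν.bind m = ν := by
  haveI : ProbabilityTheory.IsMarkovKernel (⟨m, hm⟩ : ProbabilityTheory.Kernel X X) :=
    ⟨fun x => hprob x⟩
  have hf : Measurable (fun x => (m x).map (fun y => (x, y))) := by
    apply Measure.measurable_of_measurable_coe
    intro s hs
    have h1 : ∀ x, (m x).map (fun y => (x, y)) s = m x (Prod.mk x ⁻¹' s) := fun x =>
      Measure.map_apply measurable_prodMk_left hs
    simp_rw [h1]
    exact ProbabilityTheory.Kernel.measurable_kernel_prodMk_left
      (κ := (⟨m, hm⟩ : ProbabilityTheory.Kernel X X)) hs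
  have hfst : (jointMeasure ν m).map Prod.fst = ν := by
    ext s hs
    rw [Measure.map_apply measurable_fst hs, jointMeasure,
      Measure.bind_apply (measurable_fst hs) hf.aemeasurable]
    have h1 : ∀ x, ((m x).map (fun y => (x, y))) (Prod.fst ⁻¹' s)
        = s.indicator (1 : X → ENNReal) x := by
      intro x
      rw [Measure.map_apply measurable_prodMk_left (measurable_fst hs)]
      by_cases hx : x ∈ s
      · have h2 : (Prod.mk x ⁻¹' (Prod.fst ⁻¹' s : Set (X × X))) = Set.univ := by
          ext y; simp [hx]
        rw [h2, Set.indicator_of_mem hx]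
        exact measure_univ
      · have h2 : (Prod.mk x ⁻¹' (Prod.fst ⁻¹' s : Set (X × X))) = ∅ := by
          ext y; simp [hx]
        rw [h2, Set.indicator_of_notMem hx]
        exact measure_empty
    simp_rw [h1]
    exact lintegral_indicator_one hs
  have hsnd : (jointMeasure ν m).map Prod.snd = ν.bind m := by
    ext s hs
    rw [Measure.map_apply measurable_snd hs, jointMeasure,
      Measure.bind_apply (measurable_snd hs) hf.aemeasurable, Measure.bind_apply hs hm.aemeasurable]
    congr 1
    ext x
    rw [Measure.map_apply measurable_prodMk_left (measurable_snd hs)]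
    congr 1
  calc ν.bind m = (jointMeasure ν m).map Prod.snd := hsnd.symm
    _ = ((jointMeasure ν m).map Prod.swap).map Prod.snd := by rw [hrev]
    _ = (jointMeasure ν m).map (Prod.snd ∘ Prod.swap) :=
        Measure.map_map measurable_snd measurable_swap
    _ = (jointMeasure ν m).map Prod.fst := rfl
    _ = ν := hfst

lemma measurableSet_NSet (hm : Measurable m) {D : Set X} (hD : MeasurableSet D) :
    MeasurableSet (NSet m D) := by
  have : NSet m D = ⋂ n, {x | 1 ≤ n → iterRW m n x D = 0} := by
    ext x; simp [NSet]
  rw [this]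
  refine MeasurableSet.iInter fun n => ?_
  by_cases hn : 1 ≤ n
  · simp only [hn, forall_true_left]
    exact ((Measure.measurable_coe hD).comp (measurable_iterRW hm n))
      (measurableSet_singleton 0)
  · simp only [hn, false_implies]
    exact MeasurableSet.univ

end Aux

/-- A metric random walk space with reversible measure `ν` is `m`-connected if and only if for
every pair of `ν`-measurable sets `A, B` of positive measure with `A ∪ B = X`, the interaction
`L_m(A,B) = ∫_A m_x(B) dν(x)` is strictly positive. -/
theorem mConnected_iff_interaction_pos {X : Type*} [MeasurableSpace X]
    (ν : Measure X) [SigmaFinite ν] (m : X → Measure X)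
    (hm : Measurable m) (hprob : ∀ x, IsProbabilityMeasure (m x))
    (hrev : Reversible ν m) :
    MConnected ν m ↔
      ∀ A B : Set X, MeasurableSet A → MeasurableSet B → 0 < ν A → 0 < ν B →
        A ∪ B = Set.univ → 0 < ∫⁻ x in A, m x B ∂ν := by
  have hinv : ν.bind m = ν := bind_eq_self hm hprob hrev
  have hmcoe : ∀ {s : Set X}, MeasurableSet s → Measurable fun x => m x s :=
    fun hs => (Measure.measurable_coe hs).comp hm
  have hnull : ∀ {s : Set X}, MeasurableSet s → ν s = 0 → ∀ᵐ x ∂ν, m x s = 0 := by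
    intro s hs h0
    have : ∫⁻ x, m x s ∂ν = 0 := by
      rw [← Measure.bind_apply hs hm.aemeasurable, hinv, h0]
    exact (lintegral_eq_zero_iff (hmcoe hs)).1 this
  constructor
  · -- m-connected → interaction positive
    intro hconn A B hA hB hApos hBpos hAB
    by_contra h
    have hL : ∫⁻ x in A, m x B ∂ν = 0 := le_antisymm (not_lt.1 h) zero_le
    obtain ⟨D, hD, hDB, hDpos, hDlt⟩ := Measure.exists_subset_measure_lt_top hB hBpos
    have hAc : Aᶜ ⊆ B := by
      intro x hx
      have : x ∈ A ∪ B := hAB ▸ Set.mem_univ x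
      rcases this with h' | h'
      · exact absurd h' hx
      · exact h'
    have h1 : ∀ᵐ x ∂ν, x ∈ A → m x B = 0 := by
      have := (setLIntegral_eq_zero_iff hA (hmcoe hB)).1 hL
      filter_upwards [this] with x hx hxA using hx hxA
    have key : ∀ n : ℕ, 1 ≤ n → ∀ᵐ x ∂ν, x ∈ A → iterRW m n x B = 0 := by
      intro n hn
      induction n with
      | zero => omega
      | succ n ih =>
        by_cases hn1 : 1 ≤ n
        · have ihn := ih hn1
          set E := A ∩ {x | iterRW m n x B ≠ 0} with hEdef
          have hEmeas : MeasurableSet E := by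
            refine hA.inter ?_
            exact (((Measure.measurable_coe hB).comp (measurable_iterRW hm n))
              (measurableSet_singleton 0)).compl
          have hEnull : ν E = 0 := by
            refine measure_mono_null ?_ (ae_iff.1 ihn)
            intro x hx
            simp only [Set.mem_setOf_eq]
            intro hcontra
            exact hx.2 (hcontra hx.1)
          have hmE := hnull hEmeas hEnull
          filter_upwards [h1, hmE] with x hxB hxE hxA
          rw [iterRW_succ_apply' hm hB]
          have hzero : (fun y => iterRW m n y B) =ᵐ[m x] 0 := by
            rw [Filter.EventuallyEq, ae_iff]
            refine measure_mono_null (t := Aᶜ ∪ E) (fun y hy => ?_) ?_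
            · show y ∈ Aᶜ ∪ E
              by_cases hyA : y ∈ A
              · exact Or.inr ⟨hyA, hy⟩
              · exact Or.inl hyA
            · refine measure_union_null ?_ hxE
              exact le_antisymm (le_trans (measure_mono hAc) (le_of_eq (hxB hxA))) zero_le
          rw [lintegral_congr_ae hzero]
          simp
        · have hn0 : n = 0 := by omega
          subst hn0
          filter_upwards [h1] with x hx hxA
          rw [iterRW_one hm]
          exact hx hxA
    have hall : ∀ᵐ x ∂ν, x ∈ A → x ∈ NSet m D := by
      have : ∀ᵐ x ∂ν, ∀ n : ℕ, 1 ≤ n → x ∈ A → iterRW m n x B = 0 := by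
        rw [ae_all_iff]
        intro n
        by_cases hn : 1 ≤ n
        · filter_upwards [key n hn] with x hx _ hxA using hx hxA
        · filter_upwards with x hx; omega
      filter_upwards [this] with x hx hxA n hn
      exact le_antisymm (le_trans (measure_mono hDB) (le_of_eq (hx n hn hxA))) zero_le
    have hND : ν (NSet m D) = 0 := hconn D hD hDpos hDlt
    have hAnull : ν A = 0 := by
      have hdiff : ν (A \ NSet m D) = 0 := by
        refine measure_mono_null ?_ (ae_iff.1 hall)
        intro x hx
        simp only [Set.mem_setOf_eq]
        intro hcontra
        exact hx.2 (hcontra hx.1)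
      have hle : ν A ≤ 0 :=
        calc ν A ≤ ν (A ∩ NSet m D) + ν (A \ NSet m D) := measure_le_inter_add_diff ν A _
          _ = 0 := by
              rw [hdiff, add_zero]
              exact measure_mono_null Set.inter_subset_right hND
      exact le_antisymm hle zero_le
    exact absurd hAnull hApos.ne'
  · -- interaction positive → m-connected
    intro hpos D hD hDpos _
    by_contra hne
    have hNpos : 0 < ν (NSet m D) := pos_iff_ne_zero.2 hne
    have hNmeas : MeasurableSet (NSet m D) := measurableSet_NSet hm hD
    -- points of N never leave N
    have hstay : ∀ x ∈ NSet m D, m x (NSet m D)ᶜ = 0 := by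
      intro x hx
      have hmem : ∀ᵐ y ∂(m x), y ∈ NSet m D := by
        have : ∀ᵐ y ∂(m x), ∀ n : ℕ, 1 ≤ n → iterRW m n y D = 0 := by
          rw [ae_all_iff]
          intro n
          by_cases hn : 1 ≤ n
          · have h0 : iterRW m (n + 1) x D = 0 := hx (n + 1) (by omega)
            rw [iterRW_succ_apply' hm hD] at h0
            have := (lintegral_eq_zero_iff
              ((Measure.measurable_coe hD).comp (measurable_iterRW hm n))).1 h0
            filter_upwards [this] with y hy _ using hy
          · filter_upwards with y hy; omega
        filter_upwards [this] with y hy using hy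
      have := ae_iff.1 hmem
      rwa [← Set.compl_def] at this
    by_cases hNc : ν (NSet m D)ᶜ = 0
    · -- N has full measure: contradicts ν D > 0 and invariance
      have hD0 : ∫⁻ x, m x D ∂ν = 0 := by
        have hae : (fun x => m x D) =ᵐ[ν] 0 := by
          rw [Filter.EventuallyEq, ae_iff]
          refine measure_mono_null (fun x hx => ?_) hNc
          simp only [Set.mem_setOf_eq, Pi.zero_apply] at hx
          intro hxN
          have := hxN 1 le_rfl
          rw [iterRW_one hm] at this
          exact hx this
        rw [lintegral_congr_ae hae]
        simp
      rw [← Measure.bind_apply hD hm.aemeasurable, hinv] at hD0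
      exact absurd hD0 hDpos.ne'
    · have hNcpos : 0 < ν (NSet m D)ᶜ := pos_iff_ne_zero.2 hNc
      have := hpos (NSet m D) (NSet m D)ᶜ hNmeas hNmeas.compl hNpos hNcpos
        (Set.union_compl_self _)
      have hzero : ∫⁻ x in NSet m D, m x (NSet m D)ᶜ ∂ν = 0 := by
        rw [setLIntegral_congr_fun hNmeas (fun x hx => hstay x hx)]
        exact lintegral_zero
      rw [hzero] at this
      exact absurd this (lt_irrefl 0)
end

section
/- Let ν be a finite invariant and reversible measure for m. Then Δ_m is ergodic (Δ_m u = 0 implies u constant ν-a.e.) if and only if P_m(D) > 0 for every ν-measurable set D with 0 < ν(D) < ν(X). -/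
open MeasureTheory

open ProbabilityTheory in
lemma jointMeasure_eq_compProd {X : Type*} [MeasurableSpace X] (ν : Measure X)
    [IsFiniteMeasure ν] (m : X → Measure X) (hm : Measurable m)
    (hprob : ∀ x, IsProbabilityMeasure (m x)) :
    jointMeasure ν m = ν.compProd ⟨m, hm⟩ := by
  haveI : IsMarkovKernel (⟨m, hm⟩ : Kernel X X) := ⟨hprob⟩
  have hmeas : Measurable fun x => (m x).map (fun y => (x, y)) := by
    apply Measure.measurable_of_measurable_coe
    intro s hs
    simp_rw [Measure.map_apply measurable_prodMk_left hs]
    exact Kernel.measurable_kernel_prodMk_left (κ := (⟨m, hm⟩ : Kernel X X)) hs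
  ext s hs
  rw [jointMeasure, Measure.bind_apply hs hmeas.aemeasurable, Measure.compProd_apply hs]
  congr 1
  ext x
  rw [Measure.map_apply measurable_prodMk_left hs]
  rfl

/-- Let `ν` be a finite invariant and reversible measure for `m`. Then `Δ_m` is ergodic
(`Δ_m u = 0` `ν`-a.e. implies `u` constant `ν`-a.e., for `u ∈ L²(X,ν)`) if and only if
`P_m(D) > 0` for every `ν`-measurable set `D` with `0 < ν(D) < ν(X)`. -/
theorem laplacian_ergodic_iff_perimeter_pos {X : Type*} [MeasurableSpace X]
    (ν : Measure X) [IsFiniteMeasure ν] (m : X → Measure X)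
    (hm : Measurable m) (hprob : ∀ x, IsProbabilityMeasure (m x))
    (hinv : ν.bind m = ν) (hrev : Reversible ν m) :
    (∀ u : X → ℝ, MemLp u 2 ν → (∀ᵐ x ∂ν, (∫ y, u y ∂(m x)) = u x) →
        ∃ c : ℝ, u =ᵐ[ν] fun _ => c) ↔
      (∀ D : Set X, MeasurableSet D → 0 < ν D → ν D < ν Set.univ →
        0 < ∫⁻ x in D, m x Dᶜ ∂ν) := by
  classical
  set κ : ProbabilityTheory.Kernel X X := ⟨m, hm⟩ with hκdef
  haveI : ProbabilityTheory.IsMarkovKernel κ := ⟨hprob⟩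
  have hκm : ∀ x, κ x = m x := fun x => rfl
  have hJ : jointMeasure ν m = ν.compProd κ := jointMeasure_eq_compProd ν m hm hprob
  set J : Measure (X × X) := ν.compProd κ with hJdef
  haveI : IsFiniteMeasure J := ⟨by
    rw [hJdef, Measure.compProd_apply_univ]; exact measure_lt_top ν _⟩
  constructor
  · -- ergodicity implies positive perimeter
    intro herg D hD hD0 hDtop
    rw [pos_iff_ne_zero]
    intro hP0
    -- joint measure of D ×ˢ Dᶜ is zero
    have hJD : J (D ×ˢ Dᶜ) = 0 := by
      rw [hJdef, Measure.compProd_apply_prod hD hD.compl]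
      simpa [hκm] using hP0
    -- by reversibility, joint measure of Dᶜ ×ˢ D is also zero
    have hswap : J (Dᶜ ×ˢ D) = 0 := by
      have hr : J.map Prod.swap = J := by
        have := hrev; rw [Reversible, hJ] at this; exact this
      calc J (Dᶜ ×ˢ D) = (J.map Prod.swap) (Dᶜ ×ˢ D) := by rw [hr]
        _ = J (Prod.swap ⁻¹' (Dᶜ ×ˢ D)) :=
            Measure.map_apply measurable_swap (hD.compl.prod hD)
        _ = J (D ×ˢ Dᶜ) := by
            congr 1; ext p; simp [Set.mem_prod, and_comm]
        _ = 0 := hJD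
    have hswap' : ∫⁻ x in Dᶜ, m x D ∂ν = 0 := by
      have := hswap
      rw [hJdef, Measure.compProd_apply_prod hD.compl hD] at this
      simpa [hκm] using this
    -- a.e. statements
    have h1 : ∀ᵐ x ∂ν, x ∈ D → m x Dᶜ = 0 :=
      (setLIntegral_eq_zero_iff hD (κ.measurable_coe hD.compl)).mp hP0
    have h2 : ∀ᵐ x ∂ν, x ∈ Dᶜ → m x D = 0 :=
      (setLIntegral_eq_zero_iff hD.compl (κ.measurable_coe hD)).mp hswap'
    -- the indicator of D is harmonic
    set u : X → ℝ := D.indicator (fun _ => (1 : ℝ)) with hu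
    have huL : MemLp u 2 ν := memLp_indicator_const 2 hD 1 (Or.inr (measure_ne_top ν D))
    have hharm : ∀ᵐ x ∂ν, (∫ y, u y ∂(m x)) = u x := by
      filter_upwards [h1, h2] with x hx1 hx2
      haveI := hprob x
      rw [hu, integral_indicator_const (1 : ℝ) hD]
      by_cases hxD : x ∈ D
      · have hc : m x D = 1 := by
          have := hx1 hxD
          exact (prob_compl_eq_zero_iff hD).mp this
        simp [Measure.real, hc, Set.indicator_of_mem hxD]
      · have hc : m x D = 0 := hx2 hxD
        simp [Measure.real, hc, Set.indicator_of_notMem hxD]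
    obtain ⟨c, hc⟩ := herg u huL hharm
    have hcnull : ν {x | u x ≠ c} = 0 := by
      have := hc
      rw [Filter.EventuallyEq, ae_iff] at this
      exact this
    have hDc0 : ν Dᶜ ≠ 0 := by
      intro h0
      have := measure_add_measure_compl hD (μ := ν)
      rw [h0, add_zero] at this
      exact absurd this (ne_of_lt hDtop)
    -- c must be both 1 and 0
    have hval : ∀ (S : Set X), ν S ≠ 0 → (S ∩ {x | u x = c}).Nonempty := by
      intro S hS
      rw [Set.nonempty_iff_ne_empty]
      intro hemp
      apply hS
      refine measure_mono_null (fun x hx => ?_) hcnull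
      show u x ≠ c
      intro h
      exact Set.eq_empty_iff_forall_notMem.mp hemp x ⟨hx, h⟩
    obtain ⟨x₁, hx₁D, hx₁⟩ := hval D hD0.ne'
    obtain ⟨x₂, hx₂D, hx₂⟩ := hval Dᶜ hDc0
    have h1c : (1 : ℝ) = c := by
      rw [← hx₁, hu, Set.indicator_of_mem hx₁D]
    have h0c : (0 : ℝ) = c := by
      rw [← hx₂, hu, Set.indicator_of_notMem hx₂D]
    exact one_ne_zero (h1c.trans h0c.symm)
  · -- positive perimeter implies ergodicity
    intro hper u hu hharm
    -- replace u by a measurable representative w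
    set w : X → ℝ := hu.1.mk u with hwdef
    have hwsm : StronglyMeasurable w := hu.1.stronglyMeasurable_mk
    have hwu : u =ᵐ[ν] w := hu.1.ae_eq_mk
    have hwm : Measurable w := hwsm.measurable
    have hwL : MemLp w 2 ν := hu.ae_eq hwu
    -- a.e. x, u = w m x-a.e.
    obtain ⟨N, hNsup, hNm, hN0⟩ :=
      exists_measurable_superset_of_null (by rw [Filter.EventuallyEq, ae_iff] at hwu; exact hwu)
    have hbindN : ∫⁻ x, m x N ∂ν = 0 := by
      have hb : (ν.bind m) N = 0 := by rw [hinv]; exact hN0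
      rwa [Measure.bind_apply hNm hm.aemeasurable] at hb
    have haeN : ∀ᵐ x ∂ν, m x N = 0 := by
      have := (lintegral_eq_zero_iff (κ.measurable_coe hNm)).mp hbindN
      filter_upwards [this] with x hx using hx
    have hharmw : ∀ᵐ x ∂ν, (∫ y, w y ∂(m x)) = w x := by
      filter_upwards [hharm, hwu, haeN] with x hx hxw hxN
      have huw : u =ᵐ[m x] w := by
        rw [Filter.EventuallyEq, ae_iff]
        exact measure_mono_null (fun y hy => hNsup hy) hxN
      rw [← integral_congr_ae huw, hx, hxw]
    -- handle trivial measure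
    by_cases hν0 : ν Set.univ = 0
    · refine ⟨0, ?_⟩
      have hz : ν = 0 := Measure.measure_univ_eq_zero.mp hν0
      rw [hz, Filter.EventuallyEq, ae_zero]
      exact Filter.eventually_bot
    -- Dirichlet energy is zero
    have hmw1 : Measurable fun p : X × X => w p.1 := hwm.comp measurable_fst
    have hmw2 : Measurable fun p : X × X => w p.2 := hwm.comp measurable_snd
    have hIsq : Integrable (fun x => w x ^ 2) ν := hwL.integrable_sq
    have hsqnorm : ∀ x : ℝ, (‖x ^ 2‖ₑ : ENNReal) = ENNReal.ofReal (x ^ 2) := fun x => by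
      rw [← Real.enorm_eq_ofReal (sq_nonneg x)]
    have hLν : ∫⁻ x, ENNReal.ofReal (w x ^ 2) ∂ν < ⊤ := hIsq.lintegral_lt_top
    -- lintegral identities
    have hL2 : ∫⁻ p, ENNReal.ofReal (w p.2 ^ 2) ∂J = ∫⁻ x, ENNReal.ofReal (w x ^ 2) ∂ν := by
      rw [hJdef, Measure.lintegral_compProd ((hmw2.pow_const 2).ennreal_ofReal)]
      have : ∫⁻ x, ∫⁻ y, ENNReal.ofReal (w y ^ 2) ∂(κ x) ∂ν
          = ∫⁻ y, ENNReal.ofReal (w y ^ 2) ∂(ν.bind m) := by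
        rw [Measure.lintegral_bind hm.aemeasurable ((hwm.pow_const 2).ennreal_ofReal).aemeasurable]
        rfl
      rw [this, hinv]
    have hL1 : ∫⁻ p, ENNReal.ofReal (w p.1 ^ 2) ∂J = ∫⁻ x, ENNReal.ofReal (w x ^ 2) ∂ν := by
      rw [hJdef, Measure.lintegral_compProd ((hmw1.pow_const 2).ennreal_ofReal)]
      congr 1
      ext x
      haveI := hprob x
      simp [hκm, lintegral_const]
    have hInt1 : Integrable (fun p : X × X => w p.1 ^ 2) J := by
      refine ⟨(hmw1.pow_const 2).aestronglyMeasurable, ?_⟩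
      rw [HasFiniteIntegral]
      simp_rw [hsqnorm]
      rw [hL1]; exact hLν
    have hInt2 : Integrable (fun p : X × X => w p.2 ^ 2) J := by
      refine ⟨(hmw2.pow_const 2).aestronglyMeasurable, ?_⟩
      rw [HasFiniteIntegral]
      simp_rw [hsqnorm]
      rw [hL2]; exact hLν
    have haddI : Integrable (fun p : X × X => w p.1 ^ 2 + w p.2 ^ 2) J := hInt1.add hInt2
    have haddI2 : Integrable (fun p : X × X => 2 * (w p.1 ^ 2 + w p.2 ^ 2)) J :=
      haddI.const_mul 2
    have hIntC : Integrable (fun p : X × X => w p.1 * w p.2) J := by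
      refine Integrable.mono' haddI (hmw1.mul hmw2).aestronglyMeasurable ?_
      refine Filter.Eventually.of_forall fun p => ?_
      rw [Real.norm_eq_abs]
      nlinarith [sq_nonneg (|w p.1| - |w p.2|), sq_abs (w p.1), sq_abs (w p.2),
        abs_nonneg (w p.1 * w p.2), abs_mul (w p.1) (w p.2), abs_abs (w p.1 * w p.2),
        le_abs_self (w p.1 * w p.2), neg_abs_le (w p.1 * w p.2)]
    have hIntE : Integrable (fun p : X × X => (w p.2 - w p.1) ^ 2) J := by
      refine Integrable.mono' haddI2
        ((hmw2.sub hmw1).pow_const 2).aestronglyMeasurable ?_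
      refine Filter.Eventually.of_forall fun p => ?_
      rw [Real.norm_eq_abs, abs_of_nonneg (sq_nonneg _)]
      nlinarith [sq_nonneg (w p.1 + w p.2)]
    -- compute the three integrals
    have hA : ∫ p, w p.2 ^ 2 ∂J = ∫ x, w x ^ 2 ∂ν := by
      rw [integral_eq_lintegral_of_nonneg_ae (Filter.Eventually.of_forall fun p => sq_nonneg _)
        (hmw2.pow_const 2).aestronglyMeasurable,
        integral_eq_lintegral_of_nonneg_ae (Filter.Eventually.of_forall fun x => sq_nonneg _)
        (hwm.pow_const 2).aestronglyMeasurable, hL2]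
    have hB : ∫ p, w p.1 ^ 2 ∂J = ∫ x, w x ^ 2 ∂ν := by
      rw [integral_eq_lintegral_of_nonneg_ae (Filter.Eventually.of_forall fun p => sq_nonneg _)
        (hmw1.pow_const 2).aestronglyMeasurable,
        integral_eq_lintegral_of_nonneg_ae (Filter.Eventually.of_forall fun x => sq_nonneg _)
        (hwm.pow_const 2).aestronglyMeasurable, hL1]
    have hC : ∫ p, w p.1 * w p.2 ∂J = ∫ x, w x ^ 2 ∂ν := by
      rw [hJdef] at hIntC ⊢
      rw [Measure.integral_compProd hIntC]
      refine integral_congr_ae ?_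
      filter_upwards [hharmw] with x hx
      rw [integral_const_mul]
      rw [hκm, hx]; ring
    have hE : ∫ p, (w p.2 - w p.1) ^ 2 ∂J = 0 := by
      have hexp : (fun p : X × X => (w p.2 - w p.1) ^ 2)
          = fun p => w p.2 ^ 2 + w p.1 ^ 2 - 2 * (w p.1 * w p.2) := by
        funext p; ring
      have hsub1 : Integrable (fun p : X × X => w p.2 ^ 2 + w p.1 ^ 2) J := hInt2.add hInt1
      have hsub2 : Integrable (fun p : X × X => 2 * (w p.1 * w p.2)) J := hIntC.const_mul 2
      rw [hexp, integral_sub hsub1 hsub2, integral_add hInt2 hInt1,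
        integral_const_mul, hA, hB, hC]
      ring
    have haeq : ∀ᵐ p ∂J, w p.1 = w p.2 := by
      have := (integral_eq_zero_iff_of_nonneg (fun p => sq_nonneg _) hIntE).mp hE
      filter_upwards [this] with p hp
      have : (w p.2 - w p.1) ^ 2 = 0 := hp
      have := (pow_eq_zero_iff two_ne_zero).mp this
      linarith [sub_eq_zero.mp this]
    have hne : J {p : X × X | w p.1 ≠ w p.2} = 0 := by
      rw [ae_iff] at haeq
      exact haeq
    -- every superlevel set has measure 0 or full measure
    have hlevel : ∀ t : ℝ, ν {x | t < w x} = 0 ∨ ν {x | t < w x} = ν Set.univ := by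
      intro t
      set D := {x | t < w x} with hDdef
      have hDmeas : MeasurableSet D := measurableSet_lt measurable_const hwm
      by_contra hcon
      push_neg at hcon
      obtain ⟨h0, huniv⟩ := hcon
      have hpos : 0 < ν D := pos_iff_ne_zero.mpr h0
      have hlt : ν D < ν Set.univ :=
        lt_of_le_of_ne (measure_mono (Set.subset_univ D)) huniv
      have hP := hper D hDmeas hpos hlt
      have hsub : D ×ˢ Dᶜ ⊆ {p : X × X | w p.1 ≠ w p.2} := by
        rintro ⟨x, y⟩ ⟨hx, hy⟩
        intro heq
        exact hy (by simpa [hDdef] using (heq ▸ hx : t < w y))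
      have hzero : J (D ×ˢ Dᶜ) = 0 := measure_mono_null hsub hne
      rw [hJdef, Measure.compProd_apply_prod hDmeas hDmeas.compl] at hzero
      have : ∫⁻ x in D, m x Dᶜ ∂ν = 0 := by simpa [hκm] using hzero
      rw [this] at hP
      exact lt_irrefl 0 hP
    -- some superlevel set is full, some is null
    have hS1 : ∃ n : ℕ, ν {x | (-(n : ℝ)) < w x} = ν Set.univ := by
      by_contra hno
      push_neg at hno
      have hz : ∀ n : ℕ, ν {x | (-(n : ℝ)) < w x} = 0 :=
        fun n => (hlevel _).resolve_right (hno n)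
      apply hν0
      have hU : (Set.univ : Set X) ⊆ ⋃ n : ℕ, {x | (-(n : ℝ)) < w x} := by
        intro x _
        obtain ⟨n, hn⟩ := exists_nat_gt (-(w x))
        exact Set.mem_iUnion.mpr ⟨n, by simpa using neg_lt.mp (by simpa using hn)⟩
      exact measure_mono_null hU (measure_iUnion_null hz)
    have hcompl0 : ∀ t : ℝ, ν {x | t < w x} = ν Set.univ → ν {x | w x ≤ t} = 0 := by
      intro t ht
      have hDmeas : MeasurableSet {x | t < w x} := measurableSet_lt measurable_const hwm
      have := measure_compl hDmeas (measure_ne_top ν _)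
      rw [ht, tsub_self] at this
      have hcompl : {x | t < w x}ᶜ = {x | w x ≤ t} := by
        ext x; simp [not_lt]
      rwa [hcompl] at this
    have hS2 : ∃ n : ℕ, ν {x | (n : ℝ) < w x} = 0 := by
      by_contra hno
      push_neg at hno
      have hz : ∀ n : ℕ, ν {x | w x ≤ (n : ℝ)} = 0 := by
        intro n
        exact hcompl0 _ ((hlevel _).resolve_left (hno n))
      apply hν0
      have hU : (Set.univ : Set X) ⊆ ⋃ n : ℕ, {x | w x ≤ (n : ℝ)} := by
        intro x _
        obtain ⟨n, hn⟩ := exists_nat_gt (w x)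
        exact Set.mem_iUnion.mpr ⟨n, le_of_lt hn⟩
      exact measure_mono_null hU (measure_iUnion_null hz)
    obtain ⟨n₁, hn₁⟩ := hS1
    obtain ⟨n₂, hn₂⟩ := hS2
    set S : Set ℝ := {t : ℝ | ν {x | t < w x} = ν Set.univ} with hSdef
    have hSne : S.Nonempty := ⟨-(n₁ : ℝ), hn₁⟩
    have hSbdd : BddAbove S := by
      refine ⟨(n₂ : ℝ), fun t ht => ?_⟩
      by_contra hlt
      push_neg at hlt
      have hsub : {x | t < w x} ⊆ {x | (n₂ : ℝ) < w x} :=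
        fun x hx => lt_trans hlt hx
      have := measure_mono_null hsub hn₂
      rw [hSdef] at ht
      exact hν0 (ht ▸ this)
    set c : ℝ := sSup S with hcdef
    -- ν {w > c} = 0
    have hgt : ν {x | c < w x} = 0 := by
      have hsub : {x | c < w x} ⊆ ⋃ n : ℕ, {x | c + 1 / (n + 1 : ℝ) < w x} := by
        intro x hx
        have hδ : (0 : ℝ) < w x - c := sub_pos.mpr hx
        obtain ⟨n, hn⟩ := exists_nat_one_div_lt hδ
        refine Set.mem_iUnion.mpr ⟨n, ?_⟩
        show c + 1 / (n + 1 : ℝ) < w x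
        have h1 : (1 : ℝ) / (n + 1) < w x - c := hn
        linarith
      refine measure_mono_null hsub (measure_iUnion_null fun n => ?_)
      refine (hlevel _).resolve_right ?_
      intro hfull
      have : c + 1 / (n + 1 : ℝ) ≤ c := le_csSup hSbdd hfull
      have hpos : (0 : ℝ) < 1 / (n + 1 : ℝ) := by positivity
      linarith
    -- ν {w < c} = 0
    have hlt : ν {x | w x < c} = 0 := by
      have hsub : {x | w x < c} ⊆ ⋃ n : ℕ, {x | w x ≤ c - 1 / (n + 1 : ℝ)} := by
        intro x hx
        have hδ : (0 : ℝ) < c - w x := sub_pos.mpr hx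
        obtain ⟨n, hn⟩ := exists_nat_one_div_lt hδ
        refine Set.mem_iUnion.mpr ⟨n, ?_⟩
        show w x ≤ c - 1 / (n + 1 : ℝ)
        have h1 : (1 : ℝ) / (n + 1) < c - w x := hn
        linarith
      refine measure_mono_null hsub (measure_iUnion_null fun n => ?_)
      have hsc : c - 1 / (n + 1 : ℝ) < c := by
        have hpos : (0 : ℝ) < 1 / (n + 1 : ℝ) := by positivity
        linarith
      obtain ⟨t, htS, hts⟩ := exists_lt_of_lt_csSup hSne hsc
      refine measure_mono_null (fun x hx => ?_) (hcompl0 t htS)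
      exact le_of_lt (lt_of_le_of_lt hx hts)
    have hwc : w =ᵐ[ν] fun _ => c := by
      rw [Filter.EventuallyEq, ae_iff]
      refine measure_mono_null (fun x hx => ?_)
        (measure_union_null hlt hgt)
      rcases lt_or_gt_of_ne (hx : w x ≠ c) with h | h
      · exact Or.inl h
      · exact Or.inr h
    exact ⟨c, hwu.trans hwc⟩
end

section
/- For a ν-measurable set D with ν(X) < ∞, the following are equivalent: (i) Δ_m χ_D = 0 ν-a.e.; (ii) m_x(D) = χ_D(x) for ν-a.e. x; (iii) P_m(D) = 0; (iv) ∫_D H^m_{∂D}(x) dν(x) = −ν(D). -/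
open MeasureTheory ENNReal

/-- For a `ν`-measurable set `D` (with `ν` finite, invariant and reversible), the following are
equivalent: (i) `Δ_m χ_D = 0` `ν`-a.e., i.e. `(m x D).toReal - χ_D(x) = 0` a.e.;
(ii) `m_x(D) = χ_D(x)` for `ν`-a.e. `x`; (iii) `P_m(D) = 0`;
(iv) `∫_D H^m_{∂D} dν = -ν(D)` where `H^m_{∂D}(x) = 1 - 2 m_x(D)`. -/
theorem laplacian_char_zero_tfae {X : Type*} [MeasurableSpace X]
    (ν : Measure X) [IsFiniteMeasure ν] (m : X → Measure X)
    (hm : Measurable m) (hprob : ∀ x, IsProbabilityMeasure (m x))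
    (hinv : ν.bind m = ν) (hrev : Reversible ν m)
    (D : Set X) (hD : MeasurableSet D) :
    ((∀ᵐ x ∂ν, (m x D).toReal - D.indicator (fun _ => (1:ℝ)) x = 0) ↔
      (∀ᵐ x ∂ν, m x D = D.indicator (fun _ => (1:ℝ≥0∞)) x)) ∧
    ((∀ᵐ x ∂ν, m x D = D.indicator (fun _ => (1:ℝ≥0∞)) x) ↔
      (∫⁻ x in D, m x Dᶜ ∂ν) = 0) ∧
    ((∫⁻ x in D, m x Dᶜ ∂ν) = 0 ↔
      (∫ x in D, (1 - 2 * (m x D).toReal) ∂ν) = -(ν D).toReal) := by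
  classical
  have hmD : Measurable fun x => m x D := (Measure.measurable_coe hD).comp hm
  have hmDc : Measurable fun x => m x Dᶜ := (Measure.measurable_coe hD.compl).comp hm
  -- measurability of the map used in jointMeasure
  letI κ : ProbabilityTheory.Kernel X X := ⟨m, hm⟩
  haveI : ProbabilityTheory.IsMarkovKernel κ := ⟨fun a => hprob a⟩
  have hf : Measurable fun x => (m x).map (fun y => (x, y)) := by
    apply Measure.measurable_of_measurable_coe
    intro s hs
    simp_rw [Measure.map_apply measurable_prodMk_left hs]
    exact ProbabilityTheory.Kernel.measurable_kernel_prodMk_left (κ := κ) hs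
  have hjoint : ∀ s t : Set X, MeasurableSet s → MeasurableSet t →
      jointMeasure ν m (s ×ˢ t) = ∫⁻ x in s, m x t ∂ν := by
    intro s t hs ht
    rw [jointMeasure, Measure.bind_apply (hs.prod ht) hf.aemeasurable]
    rw [← lintegral_indicator hs]
    congr 1
    ext x
    rw [Measure.map_apply measurable_prodMk_left (hs.prod ht),
      Set.mk_preimage_prod_right_eq_if]
    by_cases hx : x ∈ s <;> simp [hx, Set.indicator]
  have hswap : (∫⁻ x in D, m x Dᶜ ∂ν) = ∫⁻ x in Dᶜ, m x D ∂ν := by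
    have h1 := congrArg (fun μ : Measure (X × X) => μ (Dᶜ ×ˢ D)) hrev
    simp only [Measure.map_apply measurable_swap (hD.compl.prod hD),
      Set.preimage_swap_prod] at h1
    rw [← hjoint D Dᶜ hD hD.compl, ← hjoint Dᶜ D hD.compl hD]
    exact h1
  refine ⟨?_, ?_, ?_⟩
  · -- (i) ↔ (ii)
    apply Filter.eventually_congr
    filter_upwards with x
    have hne : m x D ≠ ⊤ := (measure_ne_top (m x) D)
    by_cases hx : x ∈ D
    · simp only [Set.indicator_of_mem hx]
      rw [sub_eq_zero, ENNReal.toReal_eq_one_iff]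
    · simp only [Set.indicator_of_notMem hx]
      rw [sub_zero, ENNReal.toReal_eq_zero_iff]
      constructor
      · rintro (h | h)
        · exact h
        · exact absurd h hne
      · exact Or.inl
  · -- (ii) ↔ (iii)
    constructor
    · intro h
      rw [lintegral_eq_zero_iff hmDc]
      filter_upwards [ae_restrict_of_ae h, ae_restrict_mem hD] with x h1 h2
      haveI := hprob x
      rw [Set.indicator_of_mem h2] at h1
      simpa [prob_compl_eq_zero_iff hD] using h1
    · intro h
      have h1 : ∀ᵐ x ∂ν.restrict D, m x Dᶜ = 0 := (lintegral_eq_zero_iff hmDc).mp h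
      have h2 : (fun x => m x D) =ᵐ[ν.restrict Dᶜ] 0 :=
        (lintegral_eq_zero_iff hmD).mp (by rw [← hswap]; exact h)
      rw [← Measure.restrict_add_restrict_compl (μ := ν) hD, ae_add_measure_iff]
      constructor
      · filter_upwards [h1, ae_restrict_mem hD] with x hx1 hx2
        haveI := hprob x
        rw [Set.indicator_of_mem hx2]
        exact (prob_compl_eq_zero_iff hD).mp hx1
      · filter_upwards [h2, ae_restrict_mem hD.compl] with x hx1 hx2
        rw [Set.indicator_of_notMem hx2]
        exact hx1
  · -- (iii) ↔ (iv)
    set L := ∫⁻ x in D, m x Dᶜ ∂ν with hL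
    have hLle : L ≤ ν D := by
      calc L ≤ ∫⁻ _ in D, 1 ∂ν := lintegral_mono fun x => by
                haveI := hprob x; exact prob_le_one
        _ = ν D := by simp
    have hLtop : L ≠ ⊤ := ne_top_of_le_ne_top (measure_ne_top ν D) hLle
    have hint : Integrable (fun x => (m x Dᶜ).toReal) (ν.restrict D) := by
      refine (integrable_const (1:ℝ)).mono' hmDc.ennreal_toReal.aestronglyMeasurable
        (Filter.Eventually.of_forall fun x => ?_)
      haveI := hprob x
      rw [Real.norm_eq_abs, abs_of_nonneg ENNReal.toReal_nonneg]
      simpa using ENNReal.toReal_mono one_ne_top prob_le_one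
    have hTL : ∫ x in D, (m x Dᶜ).toReal ∂ν = L.toReal := by
      rw [hL]
      exact integral_toReal hmDc.aemeasurable
        (Filter.Eventually.of_forall fun x => measure_lt_top _ _)
    have key : ∫ x in D, (1 - 2 * (m x D).toReal) ∂ν = 2 * L.toReal - (ν D).toReal := by
      have hcongr : ∫ x in D, (1 - 2 * (m x D).toReal) ∂ν
          = ∫ x in D, (2 * (m x Dᶜ).toReal - 1) ∂ν := by
        refine integral_congr_ae (Filter.Eventually.of_forall fun x => ?_)
        haveI := hprob x
        show 1 - 2 * (m x D).toReal = 2 * (m x Dᶜ).toReal - 1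
        have hsum : m x D + m x Dᶜ = 1 := by
          rw [measure_add_measure_compl hD, measure_univ]
        have := congrArg ENNReal.toReal hsum
        rw [ENNReal.toReal_add (measure_ne_top _ _) (measure_ne_top _ _)] at this
        simp only [ENNReal.toReal_one] at this
        linarith
      rw [hcongr, integral_sub (hint.const_mul 2) (integrable_const 1),
        integral_const_mul, hTL]
      simp [Measure.real]
    rw [key]
    constructor
    · intro hzero
      rw [hzero]
      simp
    · intro h
      have : L.toReal = 0 := by linarith
      exact ((ENNReal.toReal_eq_zero_iff L).mp this).resolve_right hLtop
end

section
/- Let ν be an invariant and reversible probability measure for m. Then the Cheeger constant equals the variational constant: h_m(X) = inf{ TV_m(u) : ‖u‖_{L¹(ν)} = 1, 0 is a median of u w.r.t. ν }. -/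
open MeasureTheory ENNReal ProbabilityTheory Set

section Helpers

variable {X : Type*} [MeasurableSpace X] {ν : Measure X} {m : X → Measure X}

lemma measurable_m_apply (hm : Measurable m) {t : Set X} (ht : MeasurableSet t) :
    Measurable fun x => m x t := (Measure.measurable_coe ht).comp hm

lemma meas_map_mk (hm : Measurable m) (hprob : ∀ x, IsProbabilityMeasure (m x)) :
    Measurable fun x => (m x).map (fun y => (x, y)) := by
  haveI : IsMarkovKernel (Kernel.mk m hm) := ⟨hprob⟩
  rw [Measure.measurable_measure]
  intro s hs
  simp_rw [Measure.map_apply measurable_prodMk_left hs]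
  exact Kernel.measurable_kernel_prodMk_left (κ := Kernel.mk m hm) hs

lemma joint_eq_compProd (hm : Measurable m) (hprob : ∀ x, IsProbabilityMeasure (m x))
    [SFinite ν] :
    jointMeasure ν m = ν.compProd (Kernel.mk m hm) := by
  haveI : IsMarkovKernel (Kernel.mk m hm) := ⟨hprob⟩
  ext s hs
  rw [jointMeasure, Measure.bind_apply hs (meas_map_mk hm hprob).aemeasurable,
    Measure.compProd_apply hs]
  refine lintegral_congr fun x => ?_
  rw [Measure.map_apply measurable_prodMk_left hs]
  rfl

lemma joint_prod (hm : Measurable m) (hprob : ∀ x, IsProbabilityMeasure (m x))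
    [SFinite ν] {s t : Set X} (hs : MeasurableSet s) (ht : MeasurableSet t) :
    jointMeasure ν m (s ×ˢ t) = ∫⁻ x in s, m x t ∂ν := by
  haveI : IsMarkovKernel (Kernel.mk m hm) := ⟨hprob⟩
  rw [joint_eq_compProd hm hprob, Measure.compProd_apply (hs.prod ht)]
  have h1 : ∀ x, (Kernel.mk m hm) x (Prod.mk x ⁻¹' (s ×ˢ t))
      = s.indicator (fun x => m x t) x := by
    intro x
    by_cases hx : x ∈ s <;> simp [Set.mk_preimage_prod_right_eq_if, hx]
  rw [lintegral_congr h1, lintegral_indicator hs]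

lemma rev_swap (hm : Measurable m) (hprob : ∀ x, IsProbabilityMeasure (m x))
    [SFinite ν] (hrev : Reversible ν m) {s t : Set X}
    (hs : MeasurableSet s) (ht : MeasurableSet t) :
    ∫⁻ x in s, m x t ∂ν = ∫⁻ x in t, m x s ∂ν := by
  have h := congrArg (fun μ : Measure (X × X) => μ (t ×ˢ s)) hrev
  simp only [Measure.map_apply measurable_swap (ht.prod hs)] at h
  rw [Set.preimage_swap_prod] at h
  rw [← joint_prod hm hprob hs ht, ← joint_prod hm hprob ht hs]
  exact h

lemma rev_lintegral (hm : Measurable m) (hprob : ∀ x, IsProbabilityMeasure (m x))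
    [SFinite ν] (hrev : Reversible ν m) {f : X × X → ℝ≥0∞} (hf : Measurable f) :
    ∫⁻ x, ∫⁻ y, f (x, y) ∂(m x) ∂ν = ∫⁻ x, ∫⁻ y, f (y, x) ∂(m x) ∂ν := by
  haveI : IsMarkovKernel (Kernel.mk m hm) := ⟨hprob⟩
  have h1 : ∫⁻ x, ∫⁻ y, f (x, y) ∂(m x) ∂ν = ∫⁻ p, f p ∂(jointMeasure ν m) := by
    rw [joint_eq_compProd hm hprob, Measure.lintegral_compProd hf]; rfl
  have h2 : ∫⁻ x, ∫⁻ y, f (y, x) ∂(m x) ∂ν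
      = ∫⁻ p, f (Prod.swap p) ∂(jointMeasure ν m) := by
    rw [joint_eq_compProd hm hprob]
    exact (Measure.lintegral_compProd (κ := Kernel.mk m hm) (f := fun p : X × X => f p.swap)
      (hf.comp measurable_swap)).symm
  rw [h1, h2, ← lintegral_map hf measurable_swap, hrev]

lemma inv_lintegral (hm : Measurable m) (hinv : ν.bind m = ν)
    {g : X → ℝ≥0∞} (hg : Measurable g) :
    ∫⁻ x, ∫⁻ y, g y ∂(m x) ∂ν = ∫⁻ y, g y ∂ν := by
  conv_rhs => rw [← hinv]
  rw [Measure.lintegral_bind hm.aemeasurable hg.aemeasurable]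

end Helpers
section Main

variable {X : Type*} [MeasurableSpace X] {ν : Measure X} [IsProbabilityMeasure ν]
  {m : X → Measure X}

lemma realPerim_eq (hm : Measurable m) (hprob : ∀ x, IsProbabilityMeasure (m x))
    {E : Set X} (hE : MeasurableSet E) :
    ∫ x in E, (m x Eᶜ).toReal ∂ν = (∫⁻ x in E, m x Eᶜ ∂ν).toReal := by
  refine integral_toReal ((measurable_m_apply hm hE.compl).aemeasurable) ?_
  filter_upwards with x
  haveI := hprob x
  exact measure_lt_top (m x) _

lemma perim_le (hprob : ∀ x, IsProbabilityMeasure (m x)) {E : Set X} :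
    ∫⁻ x in E, m x Eᶜ ∂ν ≤ ν E := by
  calc ∫⁻ x in E, m x Eᶜ ∂ν ≤ ∫⁻ _ in E, 1 ∂ν := by
        refine lintegral_mono fun x => ?_
        haveI := hprob x
        exact prob_le_one
    _ = ν E := by simp

lemma perim_ne_top (hprob : ∀ x, IsProbabilityMeasure (m x)) {E : Set X} :
    ∫⁻ x in E, m x Eᶜ ∂ν ≠ ⊤ :=
  ((perim_le hprob).trans_lt (measure_lt_top ν E)).ne

/-- The `TV` Bochner double integral equals the `lintegral` of the positive part,
together with finiteness. -/
lemma TV_eq (hm : Measurable m) (hprob : ∀ x, IsProbabilityMeasure (m x))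
    (hinv : ν.bind m = ν) (hrev : Reversible ν m) {u : X → ℝ}
    (hu : Measurable u) (hint : Integrable u ν) :
    (1/2 : ℝ) * ∫ x, (∫ y, |u y - u x| ∂(m x)) ∂ν
      = (∫⁻ x, ∫⁻ y, ENNReal.ofReal (u y - u x) ∂(m x) ∂ν).toReal
    ∧ ∫⁻ x, ∫⁻ y, ENNReal.ofReal (u y - u x) ∂(m x) ∂ν ≠ ⊤ := by
  haveI : IsMarkovKernel (Kernel.mk m hm) := ⟨hprob⟩
  set L := ∫⁻ x, ENNReal.ofReal |u x| ∂ν with hLdef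
  have hLtop : L ≠ ⊤ := by
    have h2 : ∫⁻ x, (‖u x‖₊ : ℝ≥0∞) ∂ν < ⊤ := hint.2
    have : L = ∫⁻ x, (‖u x‖₊ : ℝ≥0∞) ∂ν := by
      refine lintegral_congr fun x => ?_
      rw [← enorm_eq_nnnorm, ← ofReal_norm, Real.norm_eq_abs]
    rw [this]; exact h2.ne
  have hmf : Measurable fun p : X × X => ENNReal.ofReal (u p.2 - u p.1) :=
    ((hu.comp measurable_snd).sub (hu.comp measurable_fst)).ennreal_ofReal
  have hmf' : Measurable fun p : X × X => ENNReal.ofReal (u p.1 - u p.2) :=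
    ((hu.comp measurable_fst).sub (hu.comp measurable_snd)).ennreal_ofReal
  have habs : Measurable fun p : X × X => ENNReal.ofReal |u p.2 - u p.1| :=
    (((hu.comp measurable_snd).sub (hu.comp measurable_fst)).abs).ennreal_ofReal
  set T := ∫⁻ x, ∫⁻ y, ENNReal.ofReal (u y - u x) ∂(m x) ∂ν with hTdef
  set T' := ∫⁻ x, ∫⁻ y, ENNReal.ofReal (u x - u y) ∂(m x) ∂ν with hT'def
  set I1 := ∫⁻ x, ∫⁻ y, ENNReal.ofReal |u y - u x| ∂(m x) ∂ν with hI1def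
  have hT1m : Measurable fun x => ∫⁻ y, ENNReal.ofReal (u y - u x) ∂(m x) :=
    Measurable.lintegral_kernel_prod_right (κ := Kernel.mk m hm) hmf
  have hGm : Measurable fun x => ∫⁻ y, ENNReal.ofReal |u y - u x| ∂(m x) :=
    Measurable.lintegral_kernel_prod_right (κ := Kernel.mk m hm) habs
  have step1 : I1 = T + T' := by
    have point : ∀ x y : X, ENNReal.ofReal |u y - u x| = ENNReal.ofReal (u y - u x) + ENNReal.ofReal (u x - u y) := by
      intro x y
      rcases le_total (u x) (u y) with h | h
      · rw [abs_of_nonneg (sub_nonneg.mpr h), ENNReal.ofReal_of_nonpos (sub_nonpos.mpr h),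
          add_zero]
      · rw [abs_of_nonpos (sub_nonpos.mpr h), ENNReal.ofReal_of_nonpos (sub_nonpos.mpr h),
          neg_sub, zero_add]
    calc I1 = ∫⁻ x, (∫⁻ y, ENNReal.ofReal (u y - u x) ∂(m x) + ∫⁻ y, ENNReal.ofReal (u x - u y) ∂(m x)) ∂ν := by
          refine lintegral_congr fun x => ?_
          simp_rw [point x]
          exact lintegral_add_left ((hu.sub measurable_const).ennreal_ofReal) _
      _ = T + T' := lintegral_add_left hT1m _
  have step2 : T' = T :=
    rev_lintegral hm hprob hrev (f := fun p : X × X => ENNReal.ofReal (u p.1 - u p.2)) hmf'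
  have step3 : I1 ≠ ⊤ := by
    have hb : I1 ≤ L + L := by
      have hmono : I1 ≤ ∫⁻ x, (∫⁻ y, ENNReal.ofReal |u y| ∂(m x) + ENNReal.ofReal |u x|) ∂ν := by
        refine lintegral_mono fun x => ?_
        have inner : ∫⁻ y, ENNReal.ofReal |u y - u x| ∂(m x)
            ≤ ∫⁻ y, (ENNReal.ofReal |u y| + ENNReal.ofReal |u x|) ∂(m x) := by
          refine lintegral_mono fun y => ?_
          rw [← ofReal_add (abs_nonneg _) (abs_nonneg _)]
          refine ofReal_le_ofReal ?_
          rw [sub_eq_add_neg]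
          exact (abs_add_le _ _).trans (by rw [abs_neg])
        refine inner.trans ?_
        rw [lintegral_add_right _ measurable_const]
        haveI := hprob x
        simp
      refine hmono.trans ?_
      rw [lintegral_add_right _ (hu.abs.ennreal_ofReal)]
      have := inv_lintegral hm hinv (g := fun y => ENNReal.ofReal |u y|) (hu.abs.ennreal_ofReal)
      rw [this]
    exact (hb.trans_lt (by simpa [lt_top_iff_ne_top] using
      (ENNReal.add_lt_top.mpr ⟨hLtop.lt_top, hLtop.lt_top⟩))).ne
  have hTtop : T ≠ ⊤ := by
    intro h
    rw [step1, step2, h] at step3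
    simp at step3
  have hreal : ∫ x, (∫ y, |u y - u x| ∂(m x)) ∂ν = I1.toReal := by
    have hIx : ∀ x : X, ∫ y, |u y - u x| ∂(m x)
        = (∫⁻ y, ENNReal.ofReal |u y - u x| ∂(m x)).toReal := fun x =>
      integral_eq_lintegral_of_nonneg_ae (ae_of_all _ fun y => abs_nonneg _)
        ((hu.sub measurable_const).abs.aestronglyMeasurable)
    simp_rw [hIx]
    refine integral_toReal hGm.aemeasurable ?_
    exact ae_lt_top hGm step3
  constructor
  · rw [hreal, step1, step2, ENNReal.toReal_add hTtop hTtop]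
    ring
  · exact hTtop
/-- Coarea formula for the positive-part double integral. -/
lemma coarea (hm : Measurable m) (hprob : ∀ x, IsProbabilityMeasure (m x))
    {u : X → ℝ} (hu : Measurable u) :
    ∫⁻ x, ∫⁻ y, ENNReal.ofReal (u y - u x) ∂(m x) ∂ν
      = ∫⁻ s, (∫⁻ x in {x | s ≤ u x}ᶜ, m x {x | s ≤ u x} ∂ν) ∂(volume : Measure ℝ) := by
  haveI : IsMarkovKernel (Kernel.mk m hm) := ⟨hprob⟩
  have hmf : Measurable fun p : X × X => ENNReal.ofReal (u p.2 - u p.1) :=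
    ((hu.comp measurable_snd).sub (hu.comp measurable_fst)).ennreal_ofReal
  set S : Set ((X × X) × ℝ) := {z | u z.1.1 < z.2 ∧ z.2 ≤ u z.1.2} with hSdef
  have hS : MeasurableSet S :=
    (measurableSet_lt (hu.comp (measurable_fst.comp measurable_fst)) measurable_snd).inter
      (measurableSet_le measurable_snd (hu.comp (measurable_snd.comp measurable_fst)))
  have hA : ∀ s : ℝ, MeasurableSet {x | s ≤ u x} := fun s =>
    measurableSet_le measurable_const hu
  calc
    ∫⁻ x, ∫⁻ y, ENNReal.ofReal (u y - u x) ∂(m x) ∂ν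
        = ∫⁻ p, ENNReal.ofReal (u p.2 - u p.1) ∂(ν.compProd (Kernel.mk m hm)) :=
      (Measure.lintegral_compProd (μ := ν) (κ := Kernel.mk m hm)
        (f := fun p : X × X => ENNReal.ofReal (u p.2 - u p.1)) hmf).symm
    _ = ∫⁻ p, ∫⁻ s, S.indicator 1 (p, s) ∂(volume : Measure ℝ)
          ∂(ν.compProd (Kernel.mk m hm)) := by
      refine lintegral_congr fun p => ?_
      have h1 : ∀ s : ℝ, S.indicator (1 : ((X × X) × ℝ) → ℝ≥0∞) (p, s)
          = (Set.Ioc (u p.1) (u p.2)).indicator (1 : ℝ → ℝ≥0∞) s := by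
        intro s
        simp only [Set.indicator_apply, hSdef, Set.mem_setOf_eq, Set.mem_Ioc, Pi.one_apply]
      simp_rw [h1]
      rw [lintegral_indicator_one measurableSet_Ioc, Real.volume_Ioc]
    _ = ∫⁻ s, ∫⁻ p, S.indicator 1 (p, s) ∂(ν.compProd (Kernel.mk m hm))
          ∂(volume : Measure ℝ) := by
      exact lintegral_lintegral_swap ((measurable_one.indicator hS).aemeasurable)
    _ = ∫⁻ s, (∫⁻ x in {x | s ≤ u x}ᶜ, m x {x | s ≤ u x} ∂ν) ∂(volume : Measure ℝ) := by
      refine lintegral_congr fun s => ?_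
      have h2 : ∀ p : X × X, S.indicator (1 : ((X × X) × ℝ) → ℝ≥0∞) (p, s)
          = (({x | s ≤ u x}ᶜ ×ˢ {x | s ≤ u x}).indicator (1 : (X × X) → ℝ≥0∞)) p := by
        intro p
        simp only [Set.indicator_apply, hSdef, Set.mem_setOf_eq, Set.mem_prod,
          Set.mem_compl_iff, not_le, Pi.one_apply]
      simp_rw [h2]
      rw [lintegral_indicator_one ((hA s).compl.prod (hA s)),
        ← joint_eq_compProd hm hprob, joint_prod hm hprob (hA s).compl (hA s)]

/-- Layer cake for the positive part. -/
lemma layer_pos {u : X → ℝ} (hu : Measurable u) :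
    ∫⁻ s in Set.Ioi (0:ℝ), ν {x | s ≤ u x} ∂volume
      = ∫⁻ x, ENNReal.ofReal (max (u x) 0) ∂ν := by
  rw [lintegral_eq_lintegral_meas_le (f := fun x => max (u x) 0) ν
    (ae_of_all _ fun x => le_max_right _ _)
    (hu.max measurable_const).aemeasurable]
  refine setLIntegral_congr_fun_ae measurableSet_Ioi (ae_of_all _ fun t ht => ?_)
  congr 1
  ext x
  simp only [Set.mem_setOf_eq, le_max_iff]
  exact ⟨fun h => Or.inl h, fun h => h.resolve_right fun h0 => absurd (ht.trans_le h0) (lt_irrefl 0)⟩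

/-- Layer cake for the negative part. -/
lemma layer_neg {u : X → ℝ} (hu : Measurable u) :
    ∫⁻ s in Set.Iio (0:ℝ), ν {x | u x < s} ∂volume
      = ∫⁻ x, ENNReal.ofReal (max (-u x) 0) ∂ν := by
  have hF : Measurable fun s : ℝ => ν {x | u x < s} :=
    Monotone.measurable fun a b hab => measure_mono fun x hx => lt_of_lt_of_le hx hab
  rw [lintegral_eq_lintegral_meas_lt (f := fun x => max (-u x) 0) ν
    (ae_of_all _ fun x => le_max_right _ _)
    (hu.neg.max measurable_const).aemeasurable]
  have hcongr : ∫⁻ t in Set.Ioi (0:ℝ), ν {a | t < max (-u a) 0} ∂volume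
      = ∫⁻ t in Set.Ioi (0:ℝ), ν {a | u a < -t} ∂volume := by
    refine setLIntegral_congr_fun_ae measurableSet_Ioi (ae_of_all _ fun t ht => ?_)
    congr 1
    ext x
    simp only [Set.mem_setOf_eq, lt_max_iff]
    constructor
    · rintro (h | h)
      · linarith
      · exact absurd (h.trans ht) (lt_irrefl t)
    · intro h; left; linarith
  rw [hcongr]
  have hmap : (volume : Measure ℝ).restrict (Set.Iio 0)
      = Measure.map Neg.neg ((volume : Measure ℝ).restrict (Set.Ioi 0)) := by
    have h1 := Measure.restrict_map (measurable_neg : Measurable (Neg.neg : ℝ → ℝ))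
      (measurableSet_Iio (a := (0:ℝ))) (μ := (volume : Measure ℝ))
    rw [Measure.map_neg_eq_self] at h1
    have h2 : (Neg.neg : ℝ → ℝ) ⁻¹' Set.Iio 0 = Set.Ioi 0 := by
      ext x; simp
    rw [h1, h2]
  rw [hmap, lintegral_map hF measurable_neg]

/-- The Cheeger set. -/
def cheegerSet {X : Type*} [MeasurableSpace X] (ν : Measure X) (m : X → Measure X) : Set ℝ :=
  {r : ℝ | ∃ D : Set X, MeasurableSet D ∧ 0 < ν D ∧ ν D < 1 ∧
    r = (∫ x in D, (m x Dᶜ).toReal ∂ν) / min (ν D).toReal (ν Dᶜ).toReal}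

lemma cheegerSet_nonneg : ∀ r ∈ cheegerSet ν m, 0 ≤ r := by
  rintro r ⟨D, hD, h0, h1, rfl⟩
  refine div_nonneg (integral_nonneg fun x => ENNReal.toReal_nonneg) ?_
  exact le_min ENNReal.toReal_nonneg ENNReal.toReal_nonneg

lemma sInf_cheeger_nonneg : 0 ≤ sInf (cheegerSet ν m) :=
  Real.sInf_nonneg cheegerSet_nonneg

lemma cheeger_bound (hm : Measurable m) (hprob : ∀ x, IsProbabilityMeasure (m x))
    (hrev : Reversible ν m) (hne : (cheegerSet ν m).Nonempty)
    {E : Set X} (hE : MeasurableSet E) (hE2 : ν E ≤ 1/2) :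
    ENNReal.ofReal (sInf (cheegerSet ν m)) * ν E ≤ ∫⁻ x in E, m x Eᶜ ∂ν := by
  rcases eq_or_ne (ν E) 0 with h0 | h0
  · simp [h0]
  have hhalf : (1/2 : ℝ≥0∞) < 1 := ENNReal.half_lt_self one_ne_zero one_ne_top
  have hE1 : ν E < 1 := lt_of_le_of_lt hE2 hhalf
  have hEc : ν Eᶜ = 1 - ν E := by
    rw [measure_compl hE (measure_ne_top ν E), measure_univ]
  have hcle : ν E ≤ ν Eᶜ := by
    rw [hEc]
    calc ν E ≤ 1/2 := hE2
      _ = 1 - 1/2 := by rw [ENNReal.sub_half one_ne_top]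
      _ ≤ 1 - ν E := tsub_le_tsub_left hE2 1
  have hmem : (∫ x in E, (m x Eᶜ).toReal ∂ν) / min (ν E).toReal (ν Eᶜ).toReal
      ∈ cheegerSet ν m := ⟨E, hE, pos_iff_ne_zero.mpr h0, hE1, rfl⟩
  have hle : sInf (cheegerSet ν m)
      ≤ (∫ x in E, (m x Eᶜ).toReal ∂ν) / min (ν E).toReal (ν Eᶜ).toReal :=
    csInf_le ⟨0, cheegerSet_nonneg⟩ hmem
  have hmineq : min (ν E).toReal (ν Eᶜ).toReal = (ν E).toReal :=
    min_eq_left (ENNReal.toReal_mono (measure_ne_top ν Eᶜ) hcle)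
  rw [hmineq, realPerim_eq hm hprob hE] at hle
  have hEpos : 0 < (ν E).toReal := ENNReal.toReal_pos h0 (measure_ne_top ν E)
  have hmul : sInf (cheegerSet ν m) * (ν E).toReal ≤ (∫⁻ x in E, m x Eᶜ ∂ν).toReal :=
    (le_div_iff₀ hEpos).mp hle
  calc ENNReal.ofReal (sInf (cheegerSet ν m)) * ν E
      = ENNReal.ofReal (sInf (cheegerSet ν m) * (ν E).toReal) := by
        rw [ENNReal.ofReal_mul sInf_cheeger_nonneg, ENNReal.ofReal_toReal (measure_ne_top ν E)]
    _ ≤ ENNReal.ofReal (∫⁻ x in E, m x Eᶜ ∂ν).toReal := ENNReal.ofReal_le_ofReal hmul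
    _ = ∫⁻ x in E, m x Eᶜ ∂ν := ENNReal.ofReal_toReal (perim_ne_top hprob)
/-- Core lower bound: the Cheeger constant bounds the total variation of any
median-zero function of unit `L¹` norm (measurable version). -/
lemma core_bound (hm : Measurable m) (hprob : ∀ x, IsProbabilityMeasure (m x))
    (hinv : ν.bind m = ν) (hrev : Reversible ν m) (hne : (cheegerSet ν m).Nonempty)
    {u : X → ℝ} (hu : Measurable u) (hint : Integrable u ν)
    (hnorm : ∫ x, |u x| ∂ν = 1)
    (hmed1 : ν {x | u x < 0} ≤ 1/2) (hmed2 : ν {x | 0 < u x} ≤ 1/2) :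
    sInf (cheegerSet ν m) ≤ (1/2 : ℝ) * ∫ x, (∫ y, |u y - u x| ∂(m x)) ∂ν := by
  obtain ⟨hTV, hTfin⟩ := TV_eq hm hprob hinv hrev hu hint
  rw [hTV]
  set h := sInf (cheegerSet ν m) with hh
  have hh0 : 0 ≤ h := sInf_cheeger_nonneg
  have hA : ∀ s : ℝ, MeasurableSet {x | s ≤ u x} := fun s =>
    measurableSet_le measurable_const hu
  set W : ℝ → ℝ≥0∞ := fun s => if 0 < s then ν {x | s ≤ u x} else ν {x | s ≤ u x}ᶜ
    with hWdef
  have hWm : Measurable W := by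
    refine Measurable.ite measurableSet_Ioi ?_ ?_
    · exact Antitone.measurable fun a b hab =>
        measure_mono fun x hx => le_trans hab hx
    · exact Monotone.measurable fun a b hab =>
        measure_mono (Set.compl_subset_compl.mpr fun x hx => le_trans hab hx)
  have key1 : ∀ s : ℝ, s ≠ 0 →
      ENNReal.ofReal h * W s ≤ ∫⁻ x in {x | s ≤ u x}ᶜ, m x {x | s ≤ u x} ∂ν := by
    intro s hs
    rcases lt_or_gt_of_ne hs with hneg | hpos
    · rw [hWdef]
      simp only [if_neg (not_lt.mpr hneg.le)]
      have hsub : {x | s ≤ u x}ᶜ ⊆ {x | u x < 0} := by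
        intro x hx
        simp only [Set.mem_compl_iff, Set.mem_setOf_eq, not_le] at hx
        exact hx.trans_le hneg.le
      have hb := cheeger_bound hm hprob hrev hne (hA s).compl
        ((measure_mono hsub).trans hmed1)
      rwa [compl_compl] at hb
    · rw [hWdef]
      simp only [if_pos hpos]
      have hsub : {x | s ≤ u x} ⊆ {x | 0 < u x} := fun x hx => lt_of_lt_of_le hpos hx
      have h1 := cheeger_bound hm hprob hrev hne (hA s)
        ((measure_mono hsub).trans hmed2)
      have h2 := rev_swap hm hprob hrev (hA s).compl (hA s)
      rw [h2]
      exact h1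
  have key2 : ∫⁻ s, W s ∂(volume : Measure ℝ) = 1 := by
    have part1 : ∫⁻ s in Set.Ioi (0:ℝ), W s ∂volume
        = ∫⁻ x, ENNReal.ofReal (max (u x) 0) ∂ν := by
      rw [← layer_pos hu]
      exact setLIntegral_congr_fun_ae measurableSet_Ioi (ae_of_all _ fun s hs => if_pos hs)
    have part2 : ∫⁻ s in (Set.Ioi (0:ℝ))ᶜ, W s ∂volume
        = ∫⁻ x, ENNReal.ofReal (max (-u x) 0) ∂ν := by
      rw [Set.compl_Ioi, ← Measure.restrict_congr_set (Iio_ae_eq_Iic (a := (0:ℝ))), ← layer_neg hu]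
      refine setLIntegral_congr_fun_ae measurableSet_Iio (ae_of_all _ fun s hs => ?_)
      rw [hWdef]
      simp only [if_neg (not_lt.mpr (Set.mem_Iio.mp hs).le)]
      have hc : {x | s ≤ u x}ᶜ = {x | u x < s} := by ext x; simp [not_le]
      rw [hc]
    rw [← lintegral_add_compl W measurableSet_Ioi, part1, part2,
      ← lintegral_add_left (hu.max measurable_const).ennreal_ofReal]
    have hsum : ∀ x : X, ENNReal.ofReal (max (u x) 0) + ENNReal.ofReal (max (-u x) 0)
        = ENNReal.ofReal |u x| := by
      intro x
      rcases le_total (u x) 0 with hx | hx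
      · rw [max_eq_right hx, max_eq_left (neg_nonneg.mpr hx), abs_of_nonpos hx,
          ENNReal.ofReal_zero, zero_add]
      · rw [max_eq_left hx, max_eq_right (neg_nonpos.mpr hx), abs_of_nonneg hx,
          ENNReal.ofReal_zero, add_zero]
    simp_rw [hsum]
    rw [← ofReal_integral_eq_lintegral_ofReal hint.abs (ae_of_all _ fun x => abs_nonneg _),
      hnorm, ENNReal.ofReal_one]
  have hTge : ENNReal.ofReal h ≤ ∫⁻ x, ∫⁻ y, ENNReal.ofReal (u y - u x) ∂(m x) ∂ν := by
    rw [coarea hm hprob hu]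
    have hne0 : ∀ᵐ s : ℝ ∂volume, s ≠ 0 := by
      rw [ae_iff]
      simp only [ne_eq, not_not]
      have : {s : ℝ | s = 0} = {0} := by ext s; simp
      rw [this, Real.volume_singleton]
    calc ENNReal.ofReal h = ∫⁻ s, ENNReal.ofReal h * W s ∂(volume : Measure ℝ) := by
          rw [lintegral_const_mul _ hWm, key2, mul_one]
      _ ≤ _ := lintegral_mono_ae (by filter_upwards [hne0] with s hs using key1 s hs)
  calc h = (ENNReal.ofReal h).toReal := (ENNReal.toReal_ofReal hh0).symm
    _ ≤ _ := ENNReal.toReal_mono hTfin hTge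
/-- The normalized indicator of a small set is admissible and realizes the Cheeger ratio. -/
lemma indicator_mem (hm : Measurable m) (hprob : ∀ x, IsProbabilityMeasure (m x))
    (hinv : ν.bind m = ν) (hrev : Reversible ν m) {E : Set X} (hE : MeasurableSet E)
    (h0 : ν E ≠ 0) (h2 : ν E ≤ 1/2) :
    ∃ u : X → ℝ, Integrable u ν ∧ (∫ x, |u x| ∂ν) = 1 ∧
      ν {x | u x < 0} ≤ 1/2 ∧ ν {x | 0 < u x} ≤ 1/2 ∧
      (1/2 : ℝ) * ∫ x, (∫ y, |u y - u x| ∂(m x)) ∂ν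
        = (∫ x in E, (m x Eᶜ).toReal ∂ν) / (ν E).toReal := by
  have hfin : ν E ≠ ⊤ := measure_ne_top ν E
  have hpos : 0 < (ν E).toReal := ENNReal.toReal_pos h0 hfin
  set c : ℝ := ((ν E).toReal)⁻¹ with hc
  have hc0 : 0 < c := inv_pos.mpr hpos
  set u : X → ℝ := fun x => E.indicator (fun _ => c) x with hu
  have hunn : ∀ x, 0 ≤ u x := fun x => Set.indicator_nonneg (fun _ _ => hc0.le) x
  have hule : ∀ x, u x ≤ c := by
    intro x
    rw [hu]
    by_cases hx : x ∈ E <;> simp [Set.indicator_apply, hx, hc0.le]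
  have hum : Measurable u := measurable_const.indicator hE
  have huint : Integrable u ν := (integrable_const c).indicator hE
  refine ⟨u, huint, ?_, ?_, ?_, ?_⟩
  · have habs : ∀ x, |u x| = u x := fun x => abs_of_nonneg (hunn x)
    simp_rw [habs]
    rw [hu, integral_indicator_const c hE, smul_eq_mul, hc, measureReal_def,
      mul_inv_cancel₀ hpos.ne']
  · have hno : {x | u x < 0} = ∅ := by
      ext x
      simp only [Set.mem_setOf_eq, Set.mem_empty_iff_false, iff_false, not_lt]
      exact hunn x
    rw [hno]
    simp
  · have hset : {x | 0 < u x} = E := by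
      ext x
      rw [hu]
      by_cases hx : x ∈ E <;> simp [Set.indicator_apply, hx, hc0]
    rw [hset]
    exact h2
  · obtain ⟨hTV, _⟩ := TV_eq hm hprob hinv hrev hum huint
    rw [hTV]
    have hinner : ∀ x, ∫⁻ y, ENNReal.ofReal (u y - u x) ∂(m x)
        = Eᶜ.indicator (fun x => ENNReal.ofReal c * m x E) x := by
      intro x
      by_cases hx : x ∈ E
      · have hzero : ∀ y, ENNReal.ofReal (u y - u x) = 0 := by
          intro y
          apply ENNReal.ofReal_of_nonpos
          have hux : u x = c := by rw [hu]; simp [Set.indicator_apply, hx]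
          rw [hux]
          exact sub_nonpos.mpr (hule y)
        simp [hzero, Set.indicator_of_notMem (by simpa using hx : x ∉ Eᶜ)]
      · have hux : u x = 0 := by rw [hu]; simp [Set.indicator_apply, hx]
        have hpt : ∀ y, ENNReal.ofReal (u y - u x)
            = E.indicator (fun _ => ENNReal.ofReal c) y := by
          intro y
          rw [hux, sub_zero, hu]
          by_cases hy : y ∈ E <;> simp [Set.indicator_apply, hy]
        rw [lintegral_congr hpt, lintegral_indicator hE, setLIntegral_const,
          Set.indicator_of_mem (Set.mem_compl hx)]
    have hT : ∫⁻ x, ∫⁻ y, ENNReal.ofReal (u y - u x) ∂(m x) ∂ν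
        = ENNReal.ofReal c * ∫⁻ x in Eᶜ, m x E ∂ν := by
      rw [lintegral_congr hinner, lintegral_indicator hE.compl,
        lintegral_const_mul _ (measurable_m_apply hm hE)]
    rw [hT, rev_swap hm hprob hrev hE.compl hE, realPerim_eq hm hprob hE,
      ENNReal.toReal_mul, ENNReal.toReal_ofReal hc0.le, hc, div_eq_mul_inv, mul_comm]
end Main

/-- Variational characterization of the Cheeger constant: for an invariant and reversible
probability measure `ν`,
`h_m(X) = inf { P_m(D)/min(ν(D), ν(X∖D)) : 0 < ν(D) < 1 }` equals
`inf { TV_m(u) : ‖u‖_{L¹(ν)} = 1, 0 is a median of u w.r.t. ν }`. -/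
theorem cheeger_constant_variational {X : Type*} [MeasurableSpace X]
    (ν : Measure X) [IsProbabilityMeasure ν] (m : X → Measure X)
    (hm : Measurable m) (hprob : ∀ x, IsProbabilityMeasure (m x))
    (hinv : ν.bind m = ν) (hrev : Reversible ν m) :
    sInf {r : ℝ | ∃ D : Set X, MeasurableSet D ∧ 0 < ν D ∧ ν D < 1 ∧
        r = (∫ x in D, (m x Dᶜ).toReal ∂ν) / min (ν D).toReal (ν Dᶜ).toReal}
      = sInf {r : ℝ | ∃ u : X → ℝ, Integrable u ν ∧ (∫ x, |u x| ∂ν) = 1 ∧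
          ν {x | u x < 0} ≤ 1/2 ∧ ν {x | 0 < u x} ≤ 1/2 ∧
          r = (1/2) * ∫ x, (∫ y, |u y - u x| ∂(m x)) ∂ν} := by
  classical
  have hrw : {r : ℝ | ∃ D : Set X, MeasurableSet D ∧ 0 < ν D ∧ ν D < 1 ∧
      r = (∫ x in D, (m x Dᶜ).toReal ∂ν) / min (ν D).toReal (ν Dᶜ).toReal}
      = cheegerSet ν m := rfl
  rw [hrw]
  set SB := {r : ℝ | ∃ u : X → ℝ, Integrable u ν ∧ (∫ x, |u x| ∂ν) = 1 ∧
      ν {x | u x < 0} ≤ 1/2 ∧ ν {x | 0 < u x} ≤ 1/2 ∧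
      r = (1/2) * ∫ x, (∫ y, |u y - u x| ∂(m x)) ∂ν} with hSBdef
  have hhalf : (1/2 : ℝ≥0∞) < 1 := ENNReal.half_lt_self one_ne_zero one_ne_top
  -- every element of `SB` is nonnegative
  have hBnonneg : ∀ r ∈ SB, (0:ℝ) ≤ r := by
    rintro r ⟨u, -, -, -, -, rfl⟩
    have hnn : 0 ≤ ∫ x, (∫ y, |u y - u x| ∂(m x)) ∂ν :=
      integral_nonneg fun x => integral_nonneg fun y => abs_nonneg _
    exact mul_nonneg (by norm_num) hnn
  -- the Cheeger set is included (in value) in `SB`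
  have hsub : cheegerSet ν m ⊆ SB := by
    rintro r ⟨D, hD, h0, h1, rfl⟩
    by_cases hD2 : ν D ≤ 1/2
    · obtain ⟨u, h1u, h2u, h3u, h4u, h5u⟩ :=
        indicator_mem hm hprob hinv hrev hD h0.ne' hD2
      refine ⟨u, h1u, h2u, h3u, h4u, ?_⟩
      have hcle : ν D ≤ ν Dᶜ := by
        rw [measure_compl hD (measure_ne_top ν D), measure_univ]
        calc ν D ≤ 1/2 := hD2
          _ = 1 - 1/2 := by rw [ENNReal.sub_half one_ne_top]
          _ ≤ 1 - ν D := tsub_le_tsub_left hD2 1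
      have hmin : min (ν D).toReal (ν Dᶜ).toReal = (ν D).toReal :=
        min_eq_left (ENNReal.toReal_mono (measure_ne_top ν Dᶜ) hcle)
      rw [hmin, ← h5u]
    · push_neg at hD2
      have hDc0 : ν Dᶜ ≠ 0 := by
        rw [measure_compl hD (measure_ne_top ν D), measure_univ]
        intro hzero
        rw [tsub_eq_zero_iff_le] at hzero
        exact h1.not_ge hzero
      have hDc2 : ν Dᶜ ≤ 1/2 := by
        rw [measure_compl hD (measure_ne_top ν D), measure_univ]
        calc 1 - ν D ≤ 1 - 1/2 := tsub_le_tsub_left hD2.le 1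
          _ = 1/2 := ENNReal.sub_half one_ne_top
      obtain ⟨u, h1u, h2u, h3u, h4u, h5u⟩ :=
        indicator_mem hm hprob hinv hrev hD.compl hDc0 hDc2
      refine ⟨u, h1u, h2u, h3u, h4u, ?_⟩
      have hmin : min (ν D).toReal (ν Dᶜ).toReal = (ν Dᶜ).toReal :=
        min_eq_right (ENNReal.toReal_mono (measure_ne_top ν D)
          (hDc2.trans hD2.le))
      have hP : ∫ x in Dᶜ, (m x Dᶜᶜ).toReal ∂ν = ∫ x in D, (m x Dᶜ).toReal ∂ν := by
        rw [realPerim_eq hm hprob hD.compl, realPerim_eq hm hprob hD]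
        congr 1
        have := rev_swap hm hprob hrev hD.compl hD
        simp only [compl_compl]
        exact this
      rw [hmin, ← hP]
      exact h5u.symm
  rcases Set.eq_empty_or_nonempty (cheegerSet ν m) with hSA | hSA
  · -- degenerate case: no admissible sets, and then no admissible functions either
    have hSB : SB = ∅ := by
      rw [Set.eq_empty_iff_forall_notMem]
      rintro r ⟨u, hint, hnorm, hmed1, hmed2, -⟩
      have hall : ∀ D : Set X, MeasurableSet D → ν D = 0 ∨ ν D = 1 := by
        intro D hD
        by_contra hcon
        push_neg at hcon
        exact (Set.eq_empty_iff_forall_notMem.mp hSA _)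
          ⟨D, hD, pos_iff_ne_zero.mpr hcon.1, lt_of_le_of_ne prob_le_one hcon.2, rfl⟩
      obtain ⟨g, hgm, hug⟩ : ∃ g : X → ℝ, Measurable g ∧ u =ᵐ[ν] g :=
        ⟨hint.1.aemeasurable.mk u, hint.1.aemeasurable.measurable_mk,
          hint.1.aemeasurable.ae_eq_mk⟩
      have htrans1 : ν {x | g x < 0} ≤ 1/2 := by
        have hset : {x | u x < 0} =ᵐ[ν] {x | g x < 0} := by
          rw [Filter.eventuallyEq_set]
          filter_upwards [hug] with x hx
          simp only [Set.mem_setOf_eq, hx]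
        rw [← measure_congr hset]
        exact hmed1
      have htrans2 : ν {x | 0 < g x} ≤ 1/2 := by
        have hset : {x | 0 < u x} =ᵐ[ν] {x | 0 < g x} := by
          rw [Filter.eventuallyEq_set]
          filter_upwards [hug] with x hx
          simp only [Set.mem_setOf_eq, hx]
        rw [← measure_congr hset]
        exact hmed2
      have h1 : ν {x | g x < 0} = 0 := by
        rcases hall _ (measurableSet_lt hgm measurable_const) with h | h
        · exact h
        · exact absurd (h ▸ htrans1) hhalf.not_ge
      have h2 : ν {x | 0 < g x} = 0 := by
        rcases hall _ (measurableSet_lt measurable_const hgm) with h | h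
        · exact h
        · exact absurd (h ▸ htrans2) hhalf.not_ge
      have hg0 : g =ᵐ[ν] 0 := by
        rw [Filter.EventuallyEq, ae_iff]
        have hsubset : {x | ¬ g x = (0 : X → ℝ) x} ⊆ {x | g x < 0} ∪ {x | 0 < g x} :=
          fun x hx => (Ne.lt_or_gt hx).imp id id
        exact measure_mono_null hsubset (measure_union_null h1 h2)
      have hzero : ∫ x, |u x| ∂ν = 0 := by
        have : (fun x => |u x|) =ᵐ[ν] fun _ => (0:ℝ) := by
          filter_upwards [hug, hg0] with x hx hx0
          rw [hx, hx0]
          simp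
        rw [integral_congr_ae this]
        simp
      rw [hnorm] at hzero
      exact one_ne_zero hzero
    rw [hSA, hSB]
  · have hSBne : SB.Nonempty := by
      obtain ⟨r, hr⟩ := hSA
      exact ⟨r, hsub hr⟩
    have key : ∀ b ∈ SB, sInf (cheegerSet ν m) ≤ b := by
      rintro b ⟨u, hint, hnorm, hmed1, hmed2, rfl⟩
      obtain ⟨g, hgm, hug⟩ : ∃ g : X → ℝ, Measurable g ∧ u =ᵐ[ν] g :=
        ⟨hint.1.aemeasurable.mk u, hint.1.aemeasurable.measurable_mk,
          hint.1.aemeasurable.ae_eq_mk⟩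
      have htrans1 : ν {x | g x < 0} ≤ 1/2 := by
        have hset : {x | u x < 0} =ᵐ[ν] {x | g x < 0} := by
          rw [Filter.eventuallyEq_set]
          filter_upwards [hug] with x hx
          simp only [Set.mem_setOf_eq, hx]
        rw [← measure_congr hset]
        exact hmed1
      have htrans2 : ν {x | 0 < g x} ≤ 1/2 := by
        have hset : {x | 0 < u x} =ᵐ[ν] {x | 0 < g x} := by
          rw [Filter.eventuallyEq_set]
          filter_upwards [hug] with x hx
          simp only [Set.mem_setOf_eq, hx]
        rw [← measure_congr hset]
        exact hmed2
      have hgint : Integrable g ν := hint.congr hug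
      have hgnorm : ∫ x, |g x| ∂ν = 1 := by
        rw [← hnorm]
        exact (integral_congr_ae (hug.mono fun x hx => by rw [hx])).symm
      have hTVeq : ∫ x, (∫ y, |u y - u x| ∂(m x)) ∂ν
          = ∫ x, (∫ y, |g y - g x| ∂(m x)) ∂ν := by
        have hnull : ν {x | ¬ u x = g x} = 0 := by
          rw [← ae_iff]
          exact hug
        obtain ⟨N, hsubN, hN, hN0⟩ := exists_measurable_superset_of_null hnull
        have hmN : ∀ᵐ x ∂ν, m x N = 0 := by
          have hint0 : ∫⁻ x, m x N ∂ν = 0 := by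
            have hinvN := inv_lintegral hm hinv
              (g := N.indicator (1 : X → ℝ≥0∞)) (measurable_one.indicator hN)
            simp_rw [lintegral_indicator_one hN] at hinvN
            exact hinvN.trans hN0
          exact (lintegral_eq_zero_iff (measurable_m_apply hm hN)).mp hint0
        refine integral_congr_ae ?_
        filter_upwards [hug, hmN] with x hx hmx
        refine integral_congr_ae ?_
        have hae : ∀ᵐ y ∂(m x), u y = g y := by
          rw [ae_iff]
          exact measure_mono_null (fun y hy => hsubN hy) hmx
        filter_upwards [hae] with y hy
        rw [hy, hx]
      rw [hTVeq]
      exact core_bound hm hprob hinv hrev hSA hgm hgint hgnorm htrans1 htrans2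
    exact le_antisymm (le_csInf hSBne key) (csInf_le_csInf ⟨0, hBnonneg⟩ hSA hsub)
end

section
/- Integrating the Bakry-Émery condition: if the Carré du champ iterate satisfies Γ₂(f) ≥ (1/n)(Δ_m f)² + K Γ(f) pointwise for all f ∈ L²(X,ν), then K·(n/(n−1))·H_m(f) ≤ ∫_X (Δ_m f)² dν for all f ∈ L²(X,ν). -/
open MeasureTheory ENNReal

/-- The `m`-Laplacian `Δ_m f(x) = ∫ (f(y) - f(x)) dm_x(y)`. -/
noncomputable def lapRW {X : Type*} [MeasurableSpace X] (m : X → Measure X) (f : X → ℝ)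
    (x : X) : ℝ :=
  (∫ y, f y ∂(m x)) - f x

/-- The carré du champ `Γ(f,g)(x) = (1/2) ∫ (f(y)-f(x))(g(y)-g(x)) dm_x(y)`. -/
noncomputable def carre {X : Type*} [MeasurableSpace X] (m : X → Measure X) (f g : X → ℝ)
    (x : X) : ℝ :=
  (1/2) * ∫ y, (f y - f x) * (g y - g x) ∂(m x)

/-- The iterated carré du champ `Γ₂(f) = (1/2) Δ_m Γ(f) - Γ(f, Δ_m f)`. -/
noncomputable def carre2 {X : Type*} [MeasurableSpace X] (m : X → Measure X) (f : X → ℝ)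
    (x : X) : ℝ :=
  (1/2) * lapRW m (fun z => carre m f f z) x - carre m f (lapRW m f) x

open ProbabilityTheory

section Aux

variable {X : Type*} [MeasurableSpace X] {ν : Measure X} [IsProbabilityMeasure ν]
  {m : X → Measure X} (hm : Measurable m)

noncomputable def mker (hm : Measurable m) : Kernel X X := Kernel.mk m hm

theorem markov_mker (hprob : ∀ x, IsProbabilityMeasure (m x)) : IsMarkovKernel (mker hm) :=
  ⟨fun x => hprob x⟩

lemma mker_apply (x : X) : mker hm x = m x := rfl

lemma joint_eq (hprob : ∀ x, IsProbabilityMeasure (m x)) : jointMeasure ν m = ν ⊗ₘ (mker hm) := by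
  have : IsMarkovKernel (mker hm) := markov_mker hm hprob
  have hmap : Measurable (fun x => (m x).map (fun y => (x, y))) := by
    apply Measure.measurable_of_measurable_coe
    intro s hs
    simp_rw [Measure.map_apply measurable_prodMk_left hs]
    exact Kernel.measurable_kernel_prodMk_left (κ := mker hm) hs
  ext s hs
  rw [jointMeasure, Measure.bind_apply hs hmap.aemeasurable, Measure.compProd_apply hs]
  congr 1
  ext x
  rw [Measure.map_apply measurable_prodMk_left hs]
  rfl


lemma map_snd_joint (hprob : ∀ x, IsProbabilityMeasure (m x)) (hinv : ν.bind m = ν) :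
    (ν ⊗ₘ (mker hm)).map Prod.snd = ν := by
  haveI : IsMarkovKernel (mker hm) := markov_mker hm hprob
  ext s hs
  rw [Measure.map_apply measurable_snd hs, Measure.compProd_apply (measurable_snd hs)]
  have : ∀ x : X, mker hm x (Prod.mk x ⁻¹' (Prod.snd ⁻¹' s)) = m x s := fun x => rfl
  simp_rw [this]
  rw [← Measure.bind_apply hs hm.aemeasurable, hinv]

lemma map_fst_joint (hprob : ∀ x, IsProbabilityMeasure (m x)) :
    (ν ⊗ₘ (mker hm)).map Prod.fst = ν := by
  haveI : IsMarkovKernel (mker hm) := markov_mker hm hprob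
  exact Measure.fst_compProd ν (mker hm)


variable (hprob : ∀ x, IsProbabilityMeasure (m x)) (hinv : ν.bind m = ν)

include hm hprob hinv

lemma integrable_snd_comp {φ : X → ℝ} (hφ : Integrable φ ν) :
    Integrable (fun q : X × X => φ q.2) (ν ⊗ₘ mker hm) := by
  have h := map_snd_joint hm hprob hinv
  have hφm' : AEStronglyMeasurable φ ((ν ⊗ₘ mker hm).map Prod.snd) := by
    rw [h]; exact hφ.1
  have h2 : Integrable φ ((ν ⊗ₘ mker hm).map Prod.snd) := by rw [h]; exact hφ
  exact (integrable_map_measure hφm' measurable_snd.aemeasurable).mp h2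

lemma integral_snd_comp {φ : X → ℝ} (hφm : AEStronglyMeasurable φ ν) :
    ∫ q, φ q.2 ∂(ν ⊗ₘ mker hm) = ∫ x, φ x ∂ν := by
  have h := map_snd_joint hm hprob hinv
  have hφm' : AEStronglyMeasurable φ ((ν ⊗ₘ mker hm).map Prod.snd) := by
    rw [h]; exact hφm
  rw [← integral_map measurable_snd.aemeasurable hφm', h]

omit hinv in
lemma integrable_fst_comp {φ : X → ℝ} (hφ : Integrable φ ν) :
    Integrable (fun q : X × X => φ q.1) (ν ⊗ₘ mker hm) := by
  have h := map_fst_joint (ν := ν) hm hprob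
  have hφm' : AEStronglyMeasurable φ ((ν ⊗ₘ mker hm).map Prod.fst) := by
    rw [h]; exact hφ.1
  have h2 : Integrable φ ((ν ⊗ₘ mker hm).map Prod.fst) := by rw [h]; exact hφ
  exact (integrable_map_measure hφm' measurable_fst.aemeasurable).mp h2

omit hinv in
lemma integral_fst_comp {φ : X → ℝ} (hφm : AEStronglyMeasurable φ ν) :
    ∫ q, φ q.1 ∂(ν ⊗ₘ mker hm) = ∫ x, φ x ∂ν := by
  have h := map_fst_joint (ν := ν) hm hprob
  have hφm' : AEStronglyMeasurable φ ((ν ⊗ₘ mker hm).map Prod.fst) := by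
    rw [h]; exact hφm
  rw [← integral_map measurable_fst.aemeasurable hφm', h]

omit hm hprob hinv in
lemma L2.mul_integrable {μ : Measure X} {f g : X → ℝ} (hf : MemLp f 2 μ) (hg : MemLp g 2 μ) :
    Integrable (fun x => f x * g x) μ := by
  have hmaj : Integrable (fun x => 1/2 * (f x ^ 2 + g x ^ 2)) μ :=
    (hf.integrable_sq.add hg.integrable_sq).const_mul (1/2)
  refine Integrable.mono' hmaj (hf.1.mul hg.1) (Filter.Eventually.of_forall fun x => ?_)
  rw [Real.norm_eq_abs, abs_mul]
  nlinarith [sq_nonneg (|f x| - |g x|), abs_nonneg (f x), abs_nonneg (g x),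
    sq_abs (f x), sq_abs (g x)]

lemma integrable_prod_mul {f g : X → ℝ} (hfm : Measurable f) (hgm : Measurable g)
    (hf : MemLp f 2 ν) (hg : MemLp g 2 ν) :
    Integrable (fun q : X × X => f q.1 * g q.2) (ν ⊗ₘ mker hm) := by
  have hmaj : Integrable (fun q : X × X => 1/2 * (f q.1 ^ 2 + g q.2 ^ 2)) (ν ⊗ₘ mker hm) :=
    ((integrable_fst_comp hm hprob hf.integrable_sq).add
      (integrable_snd_comp hm hprob hinv hg.integrable_sq)).const_mul (1/2)
  refine Integrable.mono' hmaj
    (((hfm.comp measurable_fst).mul (hgm.comp measurable_snd)).aestronglyMeasurable)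
    (Filter.Eventually.of_forall fun q => ?_)
  rw [Real.norm_eq_abs, abs_mul]
  nlinarith [sq_nonneg (|f q.1| - |g q.2|), abs_nonneg (f q.1), abs_nonneg (g q.2),
    sq_abs (f q.1), sq_abs (g q.2)]

omit hinv in
lemma integrable_integral_compProd' {F : X × X → ℝ}
    (hF : Integrable F (ν ⊗ₘ mker hm)) :
    Integrable (fun x => ∫ y, F (x, y) ∂(m x)) ν := by
  haveI : IsMarkovKernel (mker hm) := markov_mker hm hprob
  rw [Measure.compProd] at hF
  have := hF.integral_compProd
  simpa [mker_apply] using this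

lemma key_prod_integral {f g : X → ℝ} (hfm : Measurable f) (hgm : Measurable g)
    (hf : MemLp f 2 ν) (hg : MemLp g 2 ν) :
    ∫ q, f q.1 * g q.2 ∂(ν ⊗ₘ mker hm) = ∫ x, f x * (∫ y, g y ∂(m x)) ∂ν := by
  haveI : IsMarkovKernel (mker hm) := markov_mker hm hprob
  rw [Measure.integral_compProd (integrable_prod_mul hm hprob hinv hfm hgm hf hg)]
  congr 1
  funext x
  exact integral_const_mul (f x) g


lemma joint_swap_integral (hrev : Reversible ν m) {F : X × X → ℝ}
    (hF : AEStronglyMeasurable F (ν ⊗ₘ mker hm)) :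
    ∫ q, F q ∂(ν ⊗ₘ mker hm) = ∫ q, F (Prod.swap q) ∂(ν ⊗ₘ mker hm) := by
  have hj := joint_eq (ν := ν) hm hprob
  have h : (ν ⊗ₘ mker hm).map Prod.swap = ν ⊗ₘ mker hm := by
    rw [← hj]; exact hrev
  have hF' : AEStronglyMeasurable F ((ν ⊗ₘ mker hm).map Prod.swap) := by rw [h]; exact hF
  calc ∫ q, F q ∂(ν ⊗ₘ mker hm) = ∫ q, F q ∂((ν ⊗ₘ mker hm).map Prod.swap) := by rw [h]
    _ = ∫ q, F (Prod.swap q) ∂(ν ⊗ₘ mker hm) := integral_map measurable_swap.aemeasurable hF'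

lemma prod_mul_comm (hrev : Reversible ν m) {f g : X → ℝ}
    (hfm : Measurable f) (hgm : Measurable g) :
    ∫ q, f q.1 * g q.2 ∂(ν ⊗ₘ mker hm) = ∫ q, g q.1 * f q.2 ∂(ν ⊗ₘ mker hm) := by
  rw [joint_swap_integral hm hprob hinv hrev
    ((show Measurable fun q : X × X => f q.1 * g q.2 from
      (hfm.comp measurable_fst).mul (hgm.comp measurable_snd)).aestronglyMeasurable)]
  simp only [Prod.fst_swap, Prod.snd_swap]
  congr 1; funext q; ring

lemma memℒp_two_P {f : X → ℝ} (hfm : Measurable f) (hf : MemLp f 2 ν) :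
    MemLp (fun x => ∫ y, f y ∂(m x)) 2 ν := by
  haveI : IsMarkovKernel (mker hm) := markov_mker hm hprob
  have hPsm : StronglyMeasurable fun x => ∫ y, f y ∂(m x) := by
    have h0 : StronglyMeasurable (Function.uncurry fun (_ y : X) => f y) :=
      (hfm.comp measurable_snd).stronglyMeasurable
    exact h0.integral_kernel_prod_right (κ := mker hm)
  have hQ : Integrable (fun x => ∫ y, (f y)^2 ∂(m x)) ν :=
    integrable_integral_compProd' hm hprob (F := fun q => (f q.2)^2)
      (integrable_snd_comp hm hprob hinv hf.integrable_sq)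
  have hmeas : Measurable fun y => ENNReal.ofReal ((f y)^2) :=
    (hfm.pow_const 2).ennreal_ofReal
  have hfin : ∀ᵐ x ∂ν, ∫⁻ y, ENNReal.ofReal ((f y)^2) ∂(m x) < ∞ := by
    have hint : ∫⁻ x, (∫⁻ y, ENNReal.ofReal ((f y)^2) ∂(m x)) ∂ν < ∞ := by
      rw [← Measure.lintegral_bind hm.aemeasurable hmeas.aemeasurable, hinv]
      exact (hasFiniteIntegral_iff_ofReal
        (Filter.Eventually.of_forall fun y => sq_nonneg _)).1 hf.integrable_sq.2
    exact ae_lt_top (Measurable.lintegral_kernel (κ := mker hm) hmeas) hint.ne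
  have hLx : ∀ᵐ x ∂ν, MemLp f 2 (m x) := by
    filter_upwards [hfin] with x hx
    haveI := hprob x
    refine (memLp_two_iff_integrable_sq hfm.aestronglyMeasurable).2
      ⟨(hfm.pow_const 2).aestronglyMeasurable, ?_⟩
    rw [hasFiniteIntegral_iff_ofReal (Filter.Eventually.of_forall fun y => sq_nonneg _)]
    exact hx
  have hb : ∀ᵐ x ∂ν, ‖(∫ y, f y ∂(m x))^2‖ ≤ ∫ y, (f y)^2 ∂(m x) := by
    filter_upwards [hLx] with x hx
    haveI := hprob x
    have h1 := ProbabilityTheory.variance_nonneg f (m x)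
    have h2 := ProbabilityTheory.variance_eq_sub hx
    have h3 : (m x)[f ^ 2] = ∫ y, (f y)^2 ∂(m x) := rfl
    rw [Real.norm_eq_abs, abs_of_nonneg (sq_nonneg _)]
    rw [h3] at h2
    linarith
  exact (memLp_two_iff_integrable_sq hPsm.aestronglyMeasurable).2
    (Integrable.mono' hQ ((hPsm.measurable.pow_const 2).aestronglyMeasurable) hb)


omit hinv in
lemma measurable_P {f : X → ℝ} (hfm : Measurable f) :
    Measurable fun x => ∫ y, f y ∂(m x) := by
  haveI : IsMarkovKernel (mker hm) := markov_mker hm hprob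
  have h0 : StronglyMeasurable (Function.uncurry fun (_ y : X) => f y) :=
    (hfm.comp measurable_snd).stronglyMeasurable
  exact (h0.integral_kernel_prod_right (κ := mker hm)).measurable

omit hinv in
lemma measurable_carre {f g : X → ℝ} (hfm : Measurable f) (hgm : Measurable g) :
    Measurable (carre m f g) := by
  haveI : IsMarkovKernel (mker hm) := markov_mker hm hprob
  have h0 : StronglyMeasurable (Function.uncurry fun (x y : X) => (f y - f x) * (g y - g x)) := by
    apply Measurable.stronglyMeasurable
    exact ((hfm.comp measurable_snd).sub (hfm.comp measurable_fst)).mul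
      ((hgm.comp measurable_snd).sub (hgm.comp measurable_fst))
  have h1 := (h0.integral_kernel_prod_right (κ := mker hm)).measurable
  exact measurable_const.mul h1

lemma carre_key (hrev : Reversible ν m) {f g : X → ℝ} (hfm : Measurable f) (hgm : Measurable g)
    (hf : MemLp f 2 ν) (hg : MemLp g 2 ν) :
    Integrable (carre m f g) ν ∧
    ∫ x, carre m f g x ∂ν
      = ∫ x, f x * g x ∂ν - ∫ x, g x * (∫ y, f y ∂(m x)) ∂ν := by
  haveI : IsMarkovKernel (mker hm) := markov_mker hm hprob
  set F : X × X → ℝ := fun q => (f q.2 - f q.1) * (g q.2 - g q.1) with hFdef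
  have F_eq : F = fun q => ((f q.2 * g q.2 - g q.1 * f q.2) - (f q.1 * g q.2 - f q.1 * g q.1)) := by
    funext q; simp only [hFdef]; ring
  have t1 : Integrable (fun q : X × X => f q.2 * g q.2) (ν ⊗ₘ mker hm) :=
    integrable_snd_comp hm hprob hinv (L2.mul_integrable hf hg)
  have t2 : Integrable (fun q : X × X => g q.1 * f q.2) (ν ⊗ₘ mker hm) :=
    integrable_prod_mul hm hprob hinv hgm hfm hg hf
  have t3 : Integrable (fun q : X × X => f q.1 * g q.2) (ν ⊗ₘ mker hm) :=
    integrable_prod_mul hm hprob hinv hfm hgm hf hg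
  have t4 : Integrable (fun q : X × X => f q.1 * g q.1) (ν ⊗ₘ mker hm) :=
    integrable_fst_comp hm hprob (L2.mul_integrable hf hg)
  have hFint : Integrable F (ν ⊗ₘ mker hm) := by
    rw [F_eq]; exact (t1.sub t2).sub (t3.sub t4)
  have hin : Integrable (fun x => ∫ y, F (x, y) ∂(m x)) ν :=
    integrable_integral_compProd' hm hprob hFint
  have hcint : Integrable (carre m f g) ν := by
    have : carre m f g = fun x => (1/2) * ∫ y, F (x, y) ∂(m x) := rfl
    rw [this]
    exact hin.const_mul (1/2)
  refine ⟨hcint, ?_⟩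
  have hiter : ∫ x, (∫ y, F (x, y) ∂(m x)) ∂ν = ∫ q, F q ∂(ν ⊗ₘ mker hm) :=
    (Measure.integral_compProd hFint).symm
  have v1 : ∫ q : X × X, f q.2 * g q.2 ∂(ν ⊗ₘ mker hm) = ∫ x, f x * g x ∂ν :=
    integral_snd_comp hm hprob hinv (L2.mul_integrable hf hg).1
  have v4 : ∫ q : X × X, f q.1 * g q.1 ∂(ν ⊗ₘ mker hm) = ∫ x, f x * g x ∂ν :=
    integral_fst_comp hm hprob (L2.mul_integrable hf hg).1
  have v2 : ∫ q : X × X, g q.1 * f q.2 ∂(ν ⊗ₘ mker hm)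
      = ∫ x, g x * (∫ y, f y ∂(m x)) ∂ν :=
    key_prod_integral hm hprob hinv hgm hfm hg hf
  have v3 : ∫ q : X × X, f q.1 * g q.2 ∂(ν ⊗ₘ mker hm)
      = ∫ q : X × X, g q.1 * f q.2 ∂(ν ⊗ₘ mker hm) :=
    prod_mul_comm hm hprob hinv hrev hfm hgm
  have hsplit : ∫ q, F q ∂(ν ⊗ₘ mker hm)
      = (∫ q : X × X, f q.2 * g q.2 ∂(ν ⊗ₘ mker hm)
          - ∫ q : X × X, g q.1 * f q.2 ∂(ν ⊗ₘ mker hm))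
        - (∫ q : X × X, f q.1 * g q.2 ∂(ν ⊗ₘ mker hm)
          - ∫ q : X × X, f q.1 * g q.1 ∂(ν ⊗ₘ mker hm)) := by
    have h1 : Integrable (fun q : X × X => f q.2 * g q.2 - g q.1 * f q.2) (ν ⊗ₘ mker hm) :=
      t1.sub t2
    have h2 : Integrable (fun q : X × X => f q.1 * g q.2 - f q.1 * g q.1) (ν ⊗ₘ mker hm) :=
      t3.sub t4
    have e : ∫ q : X × X, ((f q.2 * g q.2 - g q.1 * f q.2) - (f q.1 * g q.2 - f q.1 * g q.1))
          ∂(ν ⊗ₘ mker hm)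
        = (∫ q : X × X, (f q.2 * g q.2 - g q.1 * f q.2) ∂(ν ⊗ₘ mker hm))
          - ∫ q : X × X, (f q.1 * g q.2 - f q.1 * g q.1) ∂(ν ⊗ₘ mker hm) := integral_sub h1 h2
    have e12 : ∫ q : X × X, (f q.2 * g q.2 - g q.1 * f q.2) ∂(ν ⊗ₘ mker hm)
        = (∫ q : X × X, f q.2 * g q.2 ∂(ν ⊗ₘ mker hm))
          - ∫ q : X × X, g q.1 * f q.2 ∂(ν ⊗ₘ mker hm) := integral_sub t1 t2
    have e34 : ∫ q : X × X, (f q.1 * g q.2 - f q.1 * g q.1) ∂(ν ⊗ₘ mker hm)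
        = (∫ q : X × X, f q.1 * g q.2 ∂(ν ⊗ₘ mker hm))
          - ∫ q : X × X, f q.1 * g q.1 ∂(ν ⊗ₘ mker hm) := integral_sub t3 t4
    rw [F_eq]
    exact e.trans (by rw [e12, e34])
  have hcar : ∫ x, carre m f g x ∂ν = (1/2) * ∫ x, (∫ y, F (x, y) ∂(m x)) ∂ν := by
    have : (fun x => carre m f g x) = fun x => (1/2) * ∫ y, F (x, y) ∂(m x) := rfl
    rw [this, integral_const_mul]
  rw [hcar, hiter, hsplit, v3, v1, v2, v4]
  ring


lemma main_meas (hrev : Reversible ν m) (n : ℝ) (hn : 1 < n) (K : ℝ)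
    (hBE : ∀ f : X → ℝ, MemLp f 2 ν →
      ∀ᵐ x ∂ν, (1/n) * (lapRW m f x)^2 + K * carre m f f x ≤ carre2 m f x)
    {f : X → ℝ} (hfm : Measurable f) (hf : MemLp f 2 ν) :
    K * (n / (n - 1)) * ((1/2) * ∫ x, (∫ y, (f y - f x)^2 ∂(m x)) ∂ν)
      ≤ ∫ x, (lapRW m f x)^2 ∂ν := by
  haveI : IsMarkovKernel (mker hm) := markov_mker hm hprob
  set Pf : X → ℝ := fun x => ∫ y, f y ∂(m x) with hPfdef
  have hPfm : Measurable Pf := measurable_P hm hprob hfm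
  have hPf2 : MemLp Pf 2 ν := memℒp_two_P hm hprob hinv hfm hf
  set g : X → ℝ := lapRW m f with hgdef
  have hgm : Measurable g := hPfm.sub hfm
  have hg2 : MemLp g 2 ν := hPf2.sub hf
  set Γ : X → ℝ := carre m f f with hΓdef
  have hΓm : Measurable Γ := measurable_carre hm hprob hfm hfm
  have hΓkey := carre_key hm hprob hinv hrev hfm hfm hf hf
  have hΓint : Integrable Γ ν := hΓkey.1
  have hΓgkey := carre_key hm hprob hinv hrev hfm hgm hf hg2
  have hΓgint : Integrable (carre m f g) ν := hΓgkey.1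
  -- value of ∫ carre m f g : equals -I where I = ∫ g^2
  set I : ℝ := ∫ x, (g x)^2 ∂ν with hIdef
  have hΓgval : ∫ x, carre m f g x ∂ν = -I := by
    rw [hΓgkey.2]
    have e1 : ∫ x, (g x * Pf x - f x * g x) ∂ν
        = (∫ x, g x * Pf x ∂ν) - ∫ x, f x * g x ∂ν :=
      integral_sub (L2.mul_integrable hg2 hPf2) (L2.mul_integrable hf hg2)
    have e2 : ∫ x, (g x * Pf x - f x * g x) ∂ν = I := by
      rw [hIdef]
      congr 1
      funext x
      have hx : g x = Pf x - f x := rfl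
      rw [hx]; ring
    have : (∫ x, g x * Pf x ∂ν) - ∫ x, f x * g x ∂ν = I := by rw [← e1, e2]
    linarith
  -- lap of Γ integrates to zero
  have hΓsnd : Integrable (fun q : X × X => Γ q.2) (ν ⊗ₘ mker hm) :=
    integrable_snd_comp hm hprob hinv hΓint
  have hPΓint : Integrable (fun x => ∫ y, Γ y ∂(m x)) ν :=
    integrable_integral_compProd' hm hprob hΓsnd
  have hPΓval : ∫ x, (∫ y, Γ y ∂(m x)) ∂ν = ∫ x, Γ x ∂ν := by
    rw [← integral_snd_comp hm hprob hinv hΓint.1]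
    exact (Measure.integral_compProd hΓsnd).symm
  have hlapint : Integrable (lapRW m Γ) ν := hPΓint.sub hΓint
  have hlapval : ∫ x, lapRW m Γ x ∂ν = 0 := by
    have e : ∫ x, ((∫ y, Γ y ∂(m x)) - Γ x) ∂ν
        = (∫ x, (∫ y, Γ y ∂(m x)) ∂ν) - ∫ x, Γ x ∂ν := integral_sub hPΓint hΓint
    have : ∫ x, lapRW m Γ x ∂ν = (∫ x, (∫ y, Γ y ∂(m x)) ∂ν) - ∫ x, Γ x ∂ν := e
    rw [this, hPΓval, sub_self]
  -- carre2
  have hc2eq : carre2 m f = fun x => (1/2) * lapRW m Γ x - carre m f g x := rfl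
  have hc2int : Integrable (carre2 m f) ν := by
    rw [hc2eq]
    exact ((hlapint.const_mul (1/2)).sub hΓgint)
  have hc2val : ∫ x, carre2 m f x ∂ν = I := by
    rw [hc2eq]
    have e : ∫ x, ((1/2) * lapRW m Γ x - carre m f g x) ∂ν
        = (∫ x, (1/2) * lapRW m Γ x ∂ν) - ∫ x, carre m f g x ∂ν :=
      integral_sub (hlapint.const_mul (1/2)) hΓgint
    rw [e, integral_const_mul, hlapval, hΓgval]
    ring
  -- integrate the BE inequality
  have hLint : Integrable (fun x => (1/n) * (lapRW m f x)^2 + K * carre m f f x) ν :=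
    (hg2.integrable_sq.const_mul (1/n)).add (hΓint.const_mul K)
  have hmono : ∫ x, ((1/n) * (lapRW m f x)^2 + K * carre m f f x) ∂ν
      ≤ ∫ x, carre2 m f x ∂ν :=
    integral_mono_ae hLint hc2int (hBE f hf)
  have hLval : ∫ x, ((1/n) * (lapRW m f x)^2 + K * carre m f f x) ∂ν
      = (1/n) * I + K * ∫ x, Γ x ∂ν := by
    rw [integral_add (hg2.integrable_sq.const_mul (1/n)) (hΓint.const_mul K),
      integral_const_mul, integral_const_mul]
  have hIeq : ∫ x, (lapRW m f x)^2 ∂ν = I := rfl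
  -- identify H
  have hH : ∫ x, Γ x ∂ν = (1/2) * ∫ x, (∫ y, (f y - f x)^2 ∂(m x)) ∂ν := by
    rw [← integral_const_mul]
    congr 1
    funext x
    show (1/2) * ∫ y, (f y - f x) * (f y - f x) ∂(m x) = (1/2) * ∫ y, (f y - f x)^2 ∂(m x)
    congr 1
    apply integral_congr_ae
    filter_upwards with y
    ring
  rw [hLval, hc2val, hH] at hmono
  set H : ℝ := (1/2) * ∫ x, (∫ y, (f y - f x)^2 ∂(m x)) ∂ν
  -- algebra: from (1/n) * I + K * H ≤ I deduce K * (n/(n-1)) * H ≤ I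
  have hn0 : (0:ℝ) < n - 1 := by linarith
  have hnn : (0:ℝ) < n := by linarith
  have h1 : K * H ≤ (1 - 1/n) * I := by linarith
  have h2 : (n / (n-1)) * (K * H) ≤ (n / (n-1)) * ((1 - 1/n) * I) :=
    mul_le_mul_of_nonneg_left h1 (le_of_lt (div_pos hnn hn0))
  have h3 : (n / (n-1)) * ((1 - 1/n) * I) = I := by
    field_simp
  calc K * (n / (n - 1)) * H = (n / (n-1)) * (K * H) := by ring
    _ ≤ (n / (n-1)) * ((1 - 1/n) * I) := h2
    _ = I := h3

end Aux

/-- Integrating the Bakry-Émery curvature-dimension condition `BE(K,n)`: if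
`Γ₂(f) ≥ (1/n)(Δ_m f)² + K Γ(f)` for all `f ∈ L²(X,ν)`, then
`K (n/(n-1)) H_m(f) ≤ ∫ (Δ_m f)² dν` for all `f ∈ L²(X,ν)`. -/
theorem integrated_bakry_emery {X : Type*} [MeasurableSpace X]
    (ν : Measure X) [IsProbabilityMeasure ν] (m : X → Measure X)
    (hm : Measurable m) (hprob : ∀ x, IsProbabilityMeasure (m x))
    (hinv : ν.bind m = ν) (hrev : Reversible ν m)
    (n : ℝ) (hn : 1 < n) (K : ℝ)
    (hBE : ∀ f : X → ℝ, MemLp f 2 ν →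
      ∀ᵐ x ∂ν, (1/n) * (lapRW m f x)^2 + K * carre m f f x ≤ carre2 m f x) :
    ∀ f : X → ℝ, MemLp f 2 ν →
      K * (n / (n - 1)) * ((1/2) * ∫ x, (∫ y, (f y - f x)^2 ∂(m x)) ∂ν)
        ≤ ∫ x, (lapRW m f x)^2 ∂ν := by
  intro f hf
  set f' : X → ℝ := hf.1.mk f with hf'def
  have hf'm : Measurable f' := hf.1.stronglyMeasurable_mk.measurable
  have hae : f =ᵐ[ν] f' := hf.1.ae_eq_mk
  have hf' : MemLp f' 2 ν := hf.ae_eq hae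
  have hN0 : ν {x | ¬ f x = f' x} = 0 := ae_iff.mp hae
  obtain ⟨N, hsub, hNm, hN⟩ := exists_measurable_superset_of_null hN0
  have hker : ∀ᵐ x ∂ν, m x N = 0 := by
    have h0 : ∫⁻ x, m x N ∂ν = 0 := by
      rw [← Measure.bind_apply hNm hm.aemeasurable, hinv]; exact hN
    exact (lintegral_eq_zero_iff ((Measure.measurable_coe hNm).comp hm)).1 h0
  have hmeq : ∀ᵐ x ∂ν, f =ᵐ[m x] f' := by
    filter_upwards [hker] with x hxN
    exact ae_iff.mpr (measure_mono_null hsub hxN)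
  have hEq1 : ∀ᵐ x ∂ν, (∫ y, (f y - f x)^2 ∂(m x)) = ∫ y, (f' y - f' x)^2 ∂(m x) := by
    filter_upwards [hae, hmeq] with x hx hx2
    refine integral_congr_ae (hx2.mono fun y hy => ?_)
    show (f y - f x)^2 = (f' y - f' x)^2
    rw [hy, hx]
  have hEq2 : ∀ᵐ x ∂ν, (lapRW m f x)^2 = (lapRW m f' x)^2 := by
    filter_upwards [hae, hmeq] with x hx hx2
    have : lapRW m f x = lapRW m f' x := by
      unfold lapRW
      rw [hx, integral_congr_ae hx2]
    rw [this]
  rw [integral_congr_ae hEq1, integral_congr_ae hEq2]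
  exact main_meas hm hprob hinv hrev n hn K hBE hf'm hf'
end

section
/- Let ν be an invariant and reversible probability measure for m with Ollivier-Ricci curvature κ_m. Then for every Lipschitz f ∈ L²(X,ν) with ‖f‖_Lip ≤ 1, the heat semigroup satisfies ‖e^{tΔ_m} f‖_Lip ≤ e^{−t κ_m} for all t ≥ 0. -/
open MeasureTheory ENNReal ProbabilityTheory
open scoped NNReal

set_option linter.unusedSectionVars false

/-- The heat semigroup `e^{tΔ_m} f` via its series representation
`e^{-t} Σ_n (t^n/n!) ∫ f dm_x^{*n}`. -/
noncomputable def heatSeries {X : Type*} [MeasurableSpace X] (m : X → Measure X)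
    (f : X → ℝ) (t : ℝ) (x : X) : ℝ :=
  Real.exp (-t) * ∑' n : ℕ, (t ^ n / (n.factorial : ℝ)) * ∫ y, f y ∂(iterRW m n x)

/-- The 1-Wasserstein distance between probability measures, expressed through
Kantorovich-Rubinstein duality. -/
noncomputable def W1dual {X : Type*} [MeasurableSpace X] [MetricSpace X]
    (μ σ : Measure X) : ℝ :=
  sSup {r : ℝ | ∃ u : X → ℝ, LipschitzWith 1 u ∧ r = (∫ z, u z ∂μ) - ∫ z, u z ∂σ}

section t
variable {X : Type*} [MeasurableSpace X] [MetricSpace X] [BorelSpace X]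
  {m : X → Measure X} {κ : ℝ}

lemma iterRW_zero (x : X) : iterRW m 0 x = Measure.dirac x := rfl
lemma iterRW_succ (n : ℕ) (x : X) : iterRW m (n+1) x = (iterRW m n x).bind m := rfl

lemma OR_iter_prob (hm : Measurable m) (hprob : ∀ x, IsProbabilityMeasure (m x)) :
    ∀ n x, IsProbabilityMeasure (iterRW m n x) := by
  intro n
  induction n with
  | zero => intro x; rw [iterRW_zero]; infer_instance
  | succ n ih =>
    intro x
    haveI := ih x
    constructor
    rw [iterRW_succ, Measure.bind_apply MeasurableSet.univ hm.aemeasurable]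
    have h : ∀ w, m w Set.univ = 1 := fun w => (hprob w).measure_univ
    simp [h]

lemma OR_lip_int {μ : Measure X} [IsFiniteMeasure μ] {x₀ : X}
    (hμ : Integrable (fun z => dist z x₀) μ) {C : ℝ≥0} {f : X → ℝ}
    (hf : LipschitzWith C f) : Integrable f μ := by
  refine Integrable.mono' ((hμ.const_mul (C : ℝ)).add (integrable_const |f x₀|))
    hf.continuous.aestronglyMeasurable ?_
  filter_upwards with z
  have h1 := hf.dist_le_mul z x₀
  rw [Real.dist_eq] at h1
  have h2 : |f z| - |f x₀| ≤ |f z - f x₀| := abs_sub_abs_le_abs_sub _ _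
  rw [Real.norm_eq_abs]
  simp only [Pi.add_apply]
  linarith
end t

set_option linter.unusedSectionVars false


section t2
variable {X : Type*} [MeasurableSpace X] [MetricSpace X] [BorelSpace X]
  {m : X → Measure X} {κ : ℝ}

lemma OR_bdd (hprob : ∀ x, IsProbabilityMeasure (m x))
    (hmom : ∀ x : X, Integrable (fun z => dist z x) (m x)) (x y : X) :
    BddAbove {r : ℝ | ∃ u : X → ℝ, LipschitzWith 1 u ∧
      r = (∫ z, u z ∂(m x)) - ∫ z, u z ∂(m y)} := by
  haveI := hprob x; haveI := hprob y
  refine ⟨(∫ z, dist z x ∂(m x)) + (∫ z, dist z y ∂(m y)) + dist x y, ?_⟩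
  rintro r ⟨u, hu, rfl⟩
  have hux : Integrable u (m x) := OR_lip_int (hmom x) hu
  have huy : Integrable u (m y) := OR_lip_int (hmom y) hu
  have h1 : (∫ z, u z ∂(m x)) - u x ≤ ∫ z, dist z x ∂(m x) := by
    have he : (∫ z, u z ∂(m x)) - u x = ∫ z, (u z - u x) ∂(m x) := by
      rw [integral_sub hux (integrable_const _), integral_const, probReal_univ]; simp
    rw [he]
    refine integral_mono (hux.sub (integrable_const _)) (hmom x) fun z => ?_
    have h := hu.dist_le_mul z x
    rw [Real.dist_eq, NNReal.coe_one, one_mul] at h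
    exact le_trans (le_abs_self _) h
  have h2 : u y - (∫ z, u z ∂(m y)) ≤ ∫ z, dist z y ∂(m y) := by
    have he : u y - (∫ z, u z ∂(m y)) = ∫ z, (u y - u z) ∂(m y) := by
      rw [integral_sub (integrable_const _) huy, integral_const, probReal_univ]; simp
    rw [he]
    refine integral_mono ((integrable_const _).sub huy) (hmom y) fun z => ?_
    have h := hu.dist_le_mul z y
    rw [Real.dist_eq, NNReal.coe_one, one_mul, abs_sub_comm] at h
    exact le_trans (le_abs_self _) h
  have h3 : u x - u y ≤ dist x y := by
    have h := hu.dist_le_mul x y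
    rw [Real.dist_eq, NNReal.coe_one, one_mul] at h
    exact le_trans (le_abs_self _) h
  linarith

lemma OR_kant (hprob : ∀ x, IsProbabilityMeasure (m x))
    (hmom : ∀ x : X, Integrable (fun z => dist z x) (m x))
    (hκ : ∀ x y : X, x ≠ y → W1dual (m x) (m y) ≤ (1 - κ) * dist x y)
    {u : X → ℝ} (hu : LipschitzWith 1 u) (x y : X) :
    (∫ z, u z ∂(m x)) - (∫ z, u z ∂(m y)) ≤ (1 - κ) * dist x y := by
  rcases eq_or_ne x y with rfl | hxy
  · simp [mul_nonneg, dist_nonneg]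
  · have h := hκ x y hxy
    rw [W1dual] at h
    exact le_trans (le_csSup (OR_bdd hprob hmom x y) ⟨u, hu, rfl⟩) h

lemma OR_kappa_le_one (hprob : ∀ x, IsProbabilityMeasure (m x))
    (hmom : ∀ x : X, Integrable (fun z => dist z x) (m x))
    (hκ : ∀ x y : X, x ≠ y → W1dual (m x) (m y) ≤ (1 - κ) * dist x y)
    {x y : X} (hxy : x ≠ y) : κ ≤ 1 := by
  have h0 : (0 : ℝ) ∈ {r : ℝ | ∃ u : X → ℝ, LipschitzWith 1 u ∧
      r = (∫ z, u z ∂(m x)) - ∫ z, u z ∂(m y)} :=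
    ⟨fun _ => 0, (LipschitzWith.const 0).weaken zero_le_one, by simp⟩
  have h := hκ x y hxy
  rw [W1dual] at h
  have h2 := le_trans (le_csSup (OR_bdd hprob hmom x y) h0) h
  nlinarith [dist_pos.2 hxy]

lemma OR_integral_bind (hm : Measurable m) (hprob : ∀ x, IsProbabilityMeasure (m x))
    {μ : Measure X} [IsProbabilityMeasure μ] {f : X → ℝ}
    (hfi : Integrable f (μ.bind m)) :
    ∫ z, f z ∂(μ.bind m) = ∫ x, ∫ z, f z ∂(m x) ∂μ := by
  set K : Kernel X X := ⟨m, hm⟩ with hK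
  haveI : IsMarkovKernel K := ⟨fun a => hprob a⟩
  have hbind : μ.bind m = (μ.compProd K).map Prod.snd := by
    ext s hs
    rw [Measure.map_apply measurable_snd hs,
      Measure.compProd_apply (measurable_snd hs), Measure.bind_apply hs hm.aemeasurable]
    rfl
  rw [hbind] at hfi ⊢
  rw [integral_map measurable_snd.aemeasurable hfi.1]
  have hfi2 : Integrable (fun p : X × X => f p.2) (μ.compProd K) :=
    (integrable_map_measure hfi.1 measurable_snd.aemeasurable).mp hfi
  rw [Measure.integral_compProd hfi2]
  rfl
end t2

section t3
variable {X : Type*} [MeasurableSpace X] [MetricSpace X] [BorelSpace X]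
  {m : X → Measure X} {κ : ℝ}

lemma OR_dist_int (hprob : ∀ x, IsProbabilityMeasure (m x))
    (hmom : ∀ x : X, Integrable (fun z => dist z x) (m x)) (w x₀ : X) :
    Integrable (fun z => dist z x₀) (m w) := by
  haveI := hprob w
  refine Integrable.mono' ((hmom w).add (integrable_const (dist w x₀)))
    ((continuous_id.dist continuous_const).aestronglyMeasurable) ?_
  filter_upwards with z
  rw [Real.norm_eq_abs, abs_of_nonneg dist_nonneg]
  simp only [Pi.add_apply]
  exact dist_triangle z w x₀

lemma OR_iter_edist (hm : Measurable m) (hprob : ∀ x, IsProbabilityMeasure (m x))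
    (hmom : ∀ x : X, Integrable (fun z => dist z x) (m x))
    (hκ : ∀ x y : X, x ≠ y → W1dual (m x) (m y) ≤ (1 - κ) * dist x y)
    (hκ1 : κ ≤ 1) (x x₀ : X) :
    ∀ n, ∫⁻ z, edist z x₀ ∂(iterRW m n x) < ⊤ := by
  have hmeas : Measurable (fun z : X => edist z x₀) :=
    (continuous_id.edist continuous_const).measurable
  intro n
  induction n with
  | zero =>
    rw [iterRW_zero, lintegral_dirac' x hmeas]
    exact edist_lt_top x x₀
  | succ n ih =>
    haveI := OR_iter_prob hm hprob n x
    set A := ∫ z, dist z x₀ ∂(m x₀) with hA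
    have hA0 : 0 ≤ A := integral_nonneg fun z => dist_nonneg
    rw [iterRW_succ, Measure.lintegral_bind hm.aemeasurable hmeas.aemeasurable]
    have hptw : ∀ w, ∫⁻ z, edist z x₀ ∂(m w) ≤
        ENNReal.ofReal A + ENNReal.ofReal (1 - κ) * edist w x₀ := by
      intro w
      haveI := hprob w
      have hint := OR_dist_int hprob hmom w x₀
      have heq : ∫⁻ z, edist z x₀ ∂(m w) = ENNReal.ofReal (∫ z, dist z x₀ ∂(m w)) := by
        simp_rw [edist_dist]
        exact (ofReal_integral_eq_lintegral_ofReal hint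
          (Filter.Eventually.of_forall fun z => dist_nonneg)).symm
      have hle : ∫ z, dist z x₀ ∂(m w) ≤ A + (1 - κ) * dist w x₀ := by
        have h := OR_kant hprob hmom hκ (LipschitzWith.dist_left x₀) w x₀
        rw [← hA] at h
        linarith
      rw [heq]
      calc ENNReal.ofReal (∫ z, dist z x₀ ∂(m w))
          ≤ ENNReal.ofReal (A + (1 - κ) * dist w x₀) := ENNReal.ofReal_le_ofReal hle
        _ = ENNReal.ofReal A + ENNReal.ofReal ((1 - κ) * dist w x₀) :=
            ENNReal.ofReal_add hA0 (mul_nonneg (by linarith) dist_nonneg)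
        _ = ENNReal.ofReal A + ENNReal.ofReal (1 - κ) * edist w x₀ := by
            rw [ENNReal.ofReal_mul (by linarith), edist_dist]
    calc ∫⁻ w, (∫⁻ z, edist z x₀ ∂(m w)) ∂(iterRW m n x)
        ≤ ∫⁻ w, (ENNReal.ofReal A + ENNReal.ofReal (1 - κ) * edist w x₀) ∂(iterRW m n x) :=
          lintegral_mono hptw
      _ = ENNReal.ofReal A + ENNReal.ofReal (1 - κ) * ∫⁻ w, edist w x₀ ∂(iterRW m n x) := by
          rw [lintegral_add_left measurable_const, lintegral_const, measure_univ, mul_one,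
            lintegral_const_mul _ hmeas]
      _ < ⊤ := by
          refine ENNReal.add_lt_top.2 ⟨ENNReal.ofReal_lt_top, ?_⟩
          exact ENNReal.mul_lt_top ENNReal.ofReal_lt_top ih

lemma OR_iter_mom (hm : Measurable m) (hprob : ∀ x, IsProbabilityMeasure (m x))
    (hmom : ∀ x : X, Integrable (fun z => dist z x) (m x))
    (hκ : ∀ x y : X, x ≠ y → W1dual (m x) (m y) ≤ (1 - κ) * dist x y)
    (hκ1 : κ ≤ 1) (n : ℕ) (x x₀ : X) :
    Integrable (fun z => dist z x₀) (iterRW m n x) := by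
  constructor
  · exact (continuous_id.dist continuous_const).aestronglyMeasurable
  · rw [hasFiniteIntegral_iff_ofReal (Filter.Eventually.of_forall fun z => dist_nonneg)]
    simp_rw [← edist_dist]
    exact OR_iter_edist hm hprob hmom hκ hκ1 x x₀ n
end t3

section t4
variable {X : Type*} [MeasurableSpace X] [MetricSpace X] [BorelSpace X]
  {m : X → Measure X} {κ : ℝ}

lemma OR_g_sub_le (hprob : ∀ x, IsProbabilityMeasure (m x))
    (hmom : ∀ x : X, Integrable (fun z => dist z x) (m x))
    (hκ : ∀ x y : X, x ≠ y → W1dual (m x) (m y) ≤ (1 - κ) * dist x y)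
    (hκ1 : κ ≤ 1) {C : ℝ≥0} {f : X → ℝ} (hf : LipschitzWith C f) (z w : X) :
    (∫ a, f a ∂(m z)) - (∫ a, f a ∂(m w)) ≤ (C : ℝ) * (1 - κ) * dist z w := by
  rcases eq_or_ne C 0 with rfl | hC
  · have hconst : ∀ a, f a = f z := by
      intro a
      have h := hf.dist_le_mul a z
      simp only [NNReal.coe_zero, zero_mul] at h
      exact dist_le_zero.1 h
    haveI := hprob z; haveI := hprob w
    have h1 : ∫ a, f a ∂(m z) = f z := by
      rw [show f = fun _ => f z from funext hconst, integral_const, probReal_univ]; simp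
    have h2 : ∫ a, f a ∂(m w) = f z := by
      rw [show f = fun _ => f z from funext hconst, integral_const, probReal_univ]; simp
    rw [h1, h2, sub_self, NNReal.coe_zero, zero_mul, zero_mul]
  · set u : X → ℝ := fun a => (C : ℝ)⁻¹ * f a with hu
    have hCpos : (0 : ℝ) < C := by positivity
    have hulip : LipschitzWith 1 u := by
      apply LipschitzWith.of_dist_le_mul
      intro a b
      rw [Real.dist_eq, NNReal.coe_one, one_mul, hu]
      simp only
      rw [← mul_sub, abs_mul, abs_of_nonneg (by positivity : (0:ℝ) ≤ (C:ℝ)⁻¹)]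
      have h := hf.dist_le_mul a b
      rw [Real.dist_eq] at h
      calc (C : ℝ)⁻¹ * |f a - f b| ≤ (C : ℝ)⁻¹ * ((C : ℝ) * dist a b) := by
            exact mul_le_mul_of_nonneg_left h (by positivity)
        _ = dist a b := by field_simp
    have h := OR_kant hprob hmom hκ hulip z w
    have he : ∀ v : X, ∫ a, u a ∂(m v) = (C : ℝ)⁻¹ * ∫ a, f a ∂(m v) := fun v =>
      integral_const_mul _ _
    rw [he z, he w, ← mul_sub] at h
    have := mul_le_mul_of_nonneg_left h (le_of_lt hCpos)
    rw [← mul_assoc, mul_inv_cancel₀ (ne_of_gt hCpos), one_mul] at this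
    linarith [this]

lemma OR_g_lip (hprob : ∀ x, IsProbabilityMeasure (m x))
    (hmom : ∀ x : X, Integrable (fun z => dist z x) (m x))
    (hκ : ∀ x y : X, x ≠ y → W1dual (m x) (m y) ≤ (1 - κ) * dist x y)
    (hκ1 : κ ≤ 1) {C : ℝ≥0} {f : X → ℝ} (hf : LipschitzWith C f) :
    LipschitzWith (C * ⟨1 - κ, by linarith⟩) (fun w => ∫ a, f a ∂(m w)) := by
  apply LipschitzWith.of_dist_le_mul
  intro z w
  rw [Real.dist_eq]
  have hcoe : ((C * ⟨1 - κ, by linarith⟩ : ℝ≥0) : ℝ) = (C : ℝ) * (1 - κ) := rfl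
  rw [hcoe, abs_sub_le_iff]
  constructor
  · exact OR_g_sub_le hprob hmom hκ hκ1 hf z w
  · rw [dist_comm z w]
    exact OR_g_sub_le hprob hmom hκ hκ1 hf w z

lemma OR_iter_contract (hm : Measurable m) (hprob : ∀ x, IsProbabilityMeasure (m x))
    (hmom : ∀ x : X, Integrable (fun z => dist z x) (m x))
    (hκ : ∀ x y : X, x ≠ y → W1dual (m x) (m y) ≤ (1 - κ) * dist x y)
    (hκ1 : κ ≤ 1) :
    ∀ (n : ℕ) (C : ℝ≥0) (f : X → ℝ), LipschitzWith C f → ∀ x y : X,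
      |(∫ z, f z ∂(iterRW m n x)) - ∫ z, f z ∂(iterRW m n y)| ≤
        (C : ℝ) * (1 - κ) ^ n * dist x y := by
  intro n
  induction n with
  | zero =>
    intro C f hf x y
    rw [iterRW_zero, iterRW_zero, integral_dirac' f x hf.continuous.stronglyMeasurable,
      integral_dirac' f y hf.continuous.stronglyMeasurable, pow_zero, mul_one]
    have h := hf.dist_le_mul x y
    rwa [Real.dist_eq] at h
  | succ n ih =>
    intro C f hf x y
    haveI hpx := OR_iter_prob hm hprob n x
    haveI hpy := OR_iter_prob hm hprob n y
    haveI hpx1 := OR_iter_prob hm hprob (n+1) x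
    haveI hpy1 := OR_iter_prob hm hprob (n+1) y
    set g : X → ℝ := fun w => ∫ a, f a ∂(m w) with hg
    have hglip := OR_g_lip hprob hmom hκ hκ1 hf
    have heqx : ∫ z, f z ∂(iterRW m (n+1) x) = ∫ w, g w ∂(iterRW m n x) := by
      rw [iterRW_succ]
      exact OR_integral_bind hm hprob
        (OR_lip_int (OR_iter_mom hm hprob hmom hκ hκ1 (n+1) x x) hf)
    have heqy : ∫ z, f z ∂(iterRW m (n+1) y) = ∫ w, g w ∂(iterRW m n y) := by
      rw [iterRW_succ]
      exact OR_integral_bind hm hprob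
        (OR_lip_int (OR_iter_mom hm hprob hmom hκ hκ1 (n+1) y y) hf)
    rw [heqx, heqy]
    calc |(∫ w, g w ∂(iterRW m n x)) - ∫ w, g w ∂(iterRW m n y)|
        ≤ ((C * ⟨1 - κ, by linarith⟩ : ℝ≥0) : ℝ) * (1 - κ) ^ n * dist x y :=
          ih _ g hglip x y
      _ = (C : ℝ) * (1 - κ) ^ (n + 1) * dist x y := by
          have hcoe : ((C * ⟨1 - κ, by linarith⟩ : ℝ≥0) : ℝ) = (C : ℝ) * (1 - κ) := rfl
          rw [hcoe]; ring
end t4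

section t5
variable {X : Type*} [MeasurableSpace X] [MetricSpace X] [BorelSpace X]
  {m : X → Measure X} {κ : ℝ}

lemma OR_mom_bound (hm : Measurable m) (hprob : ∀ x, IsProbabilityMeasure (m x))
    (hmom : ∀ x : X, Integrable (fun z => dist z x) (m x))
    (hκ : ∀ x y : X, x ≠ y → W1dual (m x) (m y) ≤ (1 - κ) * dist x y)
    (hκ1 : κ ≤ 1) (x : X) :
    ∀ n : ℕ, ∫ z, dist z x ∂(iterRW m n x) ≤
      (∫ z, dist z x ∂(m x)) * n * (2 - κ) ^ n := by
  set A := ∫ z, dist z x ∂(m x) with hA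
  have hA0 : 0 ≤ A := integral_nonneg fun z => dist_nonneg
  have hB1 : (1 : ℝ) ≤ 2 - κ := by linarith
  have hB0 : (0 : ℝ) ≤ 2 - κ := by linarith
  intro n
  induction n with
  | zero =>
    rw [iterRW_zero, integral_dirac' _ x
      (LipschitzWith.dist_left x).continuous.stronglyMeasurable]
    simp
  | succ n ih =>
    haveI := OR_iter_prob hm hprob n x
    haveI := OR_iter_prob hm hprob (n+1) x
    set g : X → ℝ := fun w => ∫ z, dist z x ∂(m w) with hg
    have hdl : LipschitzWith 1 (fun z => dist z x) := LipschitzWith.dist_left x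
    have heq : ∫ z, dist z x ∂(iterRW m (n+1) x) = ∫ w, g w ∂(iterRW m n x) := by
      rw [iterRW_succ]
      exact OR_integral_bind hm hprob (OR_iter_mom hm hprob hmom hκ hκ1 (n+1) x x)
    have hgle : ∀ w, g w ≤ A + (1 - κ) * dist w x := by
      intro w
      have h := OR_kant hprob hmom hκ hdl w x
      simp only [hg]
      linarith
    have hglip := OR_g_lip hprob hmom hκ hκ1 hdl
    have hgint : Integrable g (iterRW m n x) :=
      OR_lip_int (OR_iter_mom hm hprob hmom hκ hκ1 n x x) hglip
    have hmomint := OR_iter_mom hm hprob hmom hκ hκ1 n x x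
    have h2 : ∫ w, g w ∂(iterRW m n x) ≤ A + (1 - κ) * ∫ w, dist w x ∂(iterRW m n x) := by
      calc ∫ w, g w ∂(iterRW m n x)
          ≤ ∫ w, (A + (1 - κ) * dist w x) ∂(iterRW m n x) :=
            integral_mono hgint ((integrable_const A).add (hmomint.const_mul (1 - κ)))
              hgle
        _ = A + (1 - κ) * ∫ w, dist w x ∂(iterRW m n x) := by
            rw [integral_add (integrable_const A) (hmomint.const_mul (1 - κ)),
              integral_const, probReal_univ, integral_const_mul]
            simp
    have h3 : (1 - κ) * ∫ w, dist w x ∂(iterRW m n x) ≤ (1 - κ) * (A * n * (2 - κ) ^ n) :=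
      mul_le_mul_of_nonneg_left ih (by linarith)
    have h4 : A + (1 - κ) * (A * n * (2 - κ) ^ n) ≤ A * (n + 1) * (2 - κ) ^ (n + 1) := by
      have hp1 : (1 : ℝ) ≤ (2 - κ) ^ (n + 1) := one_le_pow₀ hB1
      have hpn : (0 : ℝ) ≤ (2 - κ) ^ n := pow_nonneg hB0 n
      have h5 : (1 - κ) * (2 - κ) ^ n ≤ (2 - κ) ^ (n + 1) := by
        rw [pow_succ]
        calc (1 - κ) * (2 - κ) ^ n = (2 - κ) ^ n * (1 - κ) := by ring
          _ ≤ (2 - κ) ^ n * (2 - κ) := mul_le_mul_of_nonneg_left (by linarith) hpn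
      have h6 : A ≤ A * (2 - κ) ^ (n + 1) := le_mul_of_one_le_right hA0 hp1
      have h7 : A * n * ((1 - κ) * (2 - κ) ^ n) ≤ A * n * (2 - κ) ^ (n + 1) :=
        mul_le_mul_of_nonneg_left h5 (by positivity)
      push_cast
      nlinarith [h6, h7]
    rw [heq]
    push_cast
    push_cast at h4
    linarith

lemma OR_summable_aux {r : ℝ} (hr : 0 ≤ r) :
    Summable (fun n : ℕ => (n : ℝ) * r ^ n / n.factorial) := by
  refine Summable.of_nonneg_of_le (fun n => by positivity) (fun n => ?_)
    (Real.summable_pow_div_factorial (2 * r))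
  rw [mul_pow]
  have h2 : ((n : ℝ)) ≤ 2 ^ n := by exact_mod_cast (Nat.lt_two_pow_self (n := n)).le
  gcongr

lemma OR_summable (hm : Measurable m) (hprob : ∀ x, IsProbabilityMeasure (m x))
    (hmom : ∀ x : X, Integrable (fun z => dist z x) (m x))
    (hκ : ∀ x y : X, x ≠ y → W1dual (m x) (m y) ≤ (1 - κ) * dist x y)
    (hκ1 : κ ≤ 1) {C : ℝ≥0} {f : X → ℝ} (hf : LipschitzWith C f)
    {t : ℝ} (ht : 0 ≤ t) (x : X) :
    Summable (fun n : ℕ => (t ^ n / (n.factorial : ℝ)) * ∫ z, f z ∂(iterRW m n x)) := by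
  set A := ∫ z, dist z x ∂(m x) with hA
  have hA0 : 0 ≤ A := integral_nonneg fun z => dist_nonneg
  have hB0 : (0 : ℝ) ≤ 2 - κ := by linarith
  refine Summable.of_norm_bounded (g :=
    fun n : ℕ => |f x| * (t ^ n / n.factorial) +
      ((C : ℝ) * A) * ((n : ℝ) * (t * (2 - κ)) ^ n / n.factorial))
    (((Real.summable_pow_div_factorial t).mul_left _).add
      ((OR_summable_aux (by positivity)).mul_left _)) (fun n => ?_)
  haveI := OR_iter_prob hm hprob n x
  have hfi : Integrable f (iterRW m n x) :=
    OR_lip_int (OR_iter_mom hm hprob hmom hκ hκ1 n x x) hf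
  have hmomint := OR_iter_mom hm hprob hmom hκ hκ1 n x x
  have h1 : |(∫ z, f z ∂(iterRW m n x)) - f x| ≤
      (C : ℝ) * ∫ z, dist z x ∂(iterRW m n x) := by
    have he : (∫ z, f z ∂(iterRW m n x)) - f x = ∫ z, (f z - f x) ∂(iterRW m n x) := by
      rw [integral_sub hfi (integrable_const _), integral_const, probReal_univ]; simp
    rw [he]
    calc |∫ z, (f z - f x) ∂(iterRW m n x)| ≤ ∫ z, |f z - f x| ∂(iterRW m n x) :=
          by simpa [Real.norm_eq_abs] using
            norm_integral_le_integral_norm (μ := iterRW m n x) (fun z => f z - f x)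
      _ ≤ ∫ z, (C : ℝ) * dist z x ∂(iterRW m n x) := by
          refine integral_mono (hfi.sub (integrable_const _)).abs
            (hmomint.const_mul _) fun z => ?_
          have h := hf.dist_le_mul z x
          rwa [Real.dist_eq] at h
      _ = (C : ℝ) * ∫ z, dist z x ∂(iterRW m n x) := integral_const_mul _ _
  have h2 : ∫ z, dist z x ∂(iterRW m n x) ≤ A * n * (2 - κ) ^ n :=
    OR_mom_bound hm hprob hmom hκ hκ1 x n
  have h3 : |∫ z, f z ∂(iterRW m n x)| ≤ |f x| + (C : ℝ) * (A * n * (2 - κ) ^ n) := by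
    have := abs_sub_abs_le_abs_sub (∫ z, f z ∂(iterRW m n x)) (f x)
    have hC0 : (0 : ℝ) ≤ C := C.coe_nonneg
    nlinarith [mul_le_mul_of_nonneg_left h2 hC0]
  have ht0 : (0 : ℝ) ≤ t ^ n / n.factorial := by positivity
  rw [Real.norm_eq_abs, abs_mul, abs_of_nonneg ht0]
  calc t ^ n / n.factorial * |∫ z, f z ∂(iterRW m n x)|
      ≤ t ^ n / n.factorial * (|f x| + (C : ℝ) * (A * n * (2 - κ) ^ n)) :=
        mul_le_mul_of_nonneg_left h3 ht0
    _ = |f x| * (t ^ n / n.factorial) +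
        ((C : ℝ) * A) * ((n : ℝ) * (t * (2 - κ)) ^ n / n.factorial) := by
        rw [mul_pow]; ring
end t5

/-- Lipschitz contraction of the heat semigroup under an Ollivier-Ricci curvature lower
bound: if `κ` is a lower bound for the Ollivier-Ricci curvature, i.e.
`W₁(m_x, m_y) ≤ (1-κ) d(x,y)` for all `x ≠ y`, then for every `1`-Lipschitz `f ∈ L²(X,ν)`
the heat semigroup satisfies `‖e^{tΔ_m} f‖_Lip ≤ e^{-tκ}` for all `t ≥ 0`. -/
theorem heat_semigroup_lipschitz_contraction {X : Type*} [MeasurableSpace X]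
    [MetricSpace X] [BorelSpace X]
    (ν : Measure X) [IsProbabilityMeasure ν] (m : X → Measure X)
    (hm : Measurable m) (hprob : ∀ x, IsProbabilityMeasure (m x))
    (hmom : ∀ x : X, Integrable (fun z => dist z x) (m x))
    (hinv : ν.bind m = ν) (hrev : Reversible ν m)
    (κ : ℝ) (hκ : ∀ x y : X, x ≠ y → W1dual (m x) (m y) ≤ (1 - κ) * dist x y) :
    ∀ f : X → ℝ, LipschitzWith 1 f → MemLp f 2 ν →
      ∀ t : ℝ, 0 ≤ t → ∀ x y : X,
        |heatSeries m f t x - heatSeries m f t y| ≤ Real.exp (-(t * κ)) * dist x y := by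
  intro f hf hf2 t ht x y
  rcases eq_or_ne x y with rfl | hxy
  · simp [mul_nonneg (Real.exp_pos _).le dist_nonneg]
  have hκ1 : κ ≤ 1 := OR_kappa_le_one hprob hmom hκ hxy
  have hsx := OR_summable hm hprob hmom hκ hκ1 hf ht x
  have hsy := OR_summable hm hprob hmom hκ hκ1 hf ht y
  rw [heatSeries, heatSeries, ← mul_sub, ← Summable.tsum_sub hsx hsy, abs_mul,
    abs_of_nonneg (Real.exp_pos (-t)).le]
  have ht0 : ∀ n : ℕ, (0 : ℝ) ≤ t ^ n / n.factorial := fun n => by positivity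
  have hbound : ∀ n : ℕ,
      ‖(t ^ n / (n.factorial : ℝ)) * (∫ z, f z ∂(iterRW m n x)) -
        (t ^ n / (n.factorial : ℝ)) * ∫ z, f z ∂(iterRW m n y)‖ ≤
      ((t * (1 - κ)) ^ n / n.factorial) * dist x y := by
    intro n
    have h := OR_iter_contract hm hprob hmom hκ hκ1 n 1 f hf x y
    rw [NNReal.coe_one, one_mul] at h
    rw [← mul_sub, Real.norm_eq_abs, abs_mul, abs_of_nonneg (ht0 n)]
    calc t ^ n / n.factorial * |(∫ z, f z ∂(iterRW m n x)) - ∫ z, f z ∂(iterRW m n y)|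
        ≤ t ^ n / n.factorial * ((1 - κ) ^ n * dist x y) :=
          mul_le_mul_of_nonneg_left h (ht0 n)
      _ = ((t * (1 - κ)) ^ n / n.factorial) * dist x y := by rw [mul_pow]; ring
  have hsum_bound : Summable (fun n : ℕ => ((t * (1 - κ)) ^ n / (n.factorial : ℝ)) * dist x y) :=
    (Real.summable_pow_div_factorial _).mul_right _
  have hnorm_sum : Summable (fun n : ℕ =>
      ‖(t ^ n / (n.factorial : ℝ)) * (∫ z, f z ∂(iterRW m n x)) -
        (t ^ n / (n.factorial : ℝ)) * ∫ z, f z ∂(iterRW m n y)‖) :=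
    Summable.of_nonneg_of_le (fun n => norm_nonneg _) hbound hsum_bound
  have hexp : ∑' n : ℕ, ((t * (1 - κ)) ^ n / (n.factorial : ℝ)) = Real.exp (t * (1 - κ)) := by
    rw [Real.exp_eq_exp_ℝ, NormedSpace.exp_eq_tsum_div]
  calc Real.exp (-t) * |∑' n : ℕ, ((t ^ n / (n.factorial : ℝ)) * (∫ z, f z ∂(iterRW m n x)) -
        (t ^ n / (n.factorial : ℝ)) * ∫ z, f z ∂(iterRW m n y))|
      ≤ Real.exp (-t) * ∑' n : ℕ,
        ‖(t ^ n / (n.factorial : ℝ)) * (∫ z, f z ∂(iterRW m n x)) -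
          (t ^ n / (n.factorial : ℝ)) * ∫ z, f z ∂(iterRW m n y)‖ := by
        refine mul_le_mul_of_nonneg_left ?_ (Real.exp_pos _).le
        simpa [Real.norm_eq_abs] using norm_tsum_le_tsum_norm hnorm_sum
    _ ≤ Real.exp (-t) * ∑' n : ℕ, ((t * (1 - κ)) ^ n / (n.factorial : ℝ)) * dist x y :=
        mul_le_mul_of_nonneg_left (Summable.tsum_le_tsum hbound hnorm_sum hsum_bound)
          (Real.exp_pos _).le
    _ = Real.exp (-t) * (Real.exp (t * (1 - κ)) * dist x y) := by
        rw [tsum_mul_right, hexp]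
    _ = Real.exp (-(t * κ)) * dist x y := by
        rw [← mul_assoc, ← Real.exp_add]
        ring_nf
end
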